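/- Let f be a strictly increasing Allee map on [0,b] with threshold A_f and carrying capacity K_f, and let g be a strictly increasing Allee map on [0,b] with threshold A_g and carrying capacity K_g, where A_f < A_g < K_f < K_g. Let δ > 0 be such that the sets U₁ = {x ∈ (0,A_f) : min(x−f(x), x−g(x)) ≥ δ}, U₂ = {x ∈ (A_g,K_f) : min(f(x)−x, g(x)−x) ≥ δ}, U₃ = {x ∈ (K_g,b) : min(x−f(x), x−g(x)) ≥ δ} are nonempty, and assume that for every x ∈ [0,b] there exists x* ∈ [x,b] with min(x*−f(x*), x*−g(x*)) ≥ δ. Set w₁ = inf U₁, w₂ = inf U₂, w₃ = inf U₃, z₁ = sup U₁ and z₂ = sup U₂. If y₀ ∈ (z₁, w₂), then, setting p₀ = μ({ω : ∃ n₀ ∈ ℕ, ∀ n ≥ n₀, Y n ω ∈ [0, w₁)}) and p₁ = μ({ω : ∃ n₀ ∈ ℕ, ∀ n ≥ n₀, Y n ω ∈ (z₂, w₃)}), we have p₀ > 0, p₁ > 0 and p₀ + p₁ = 1. -/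

import Mathlib

open MeasureTheory ProbabilityTheory Filter Set

/-- `f` is a strictly increasing Allee map on `[0, b]` with threshold `A` and
carrying capacity `K`. -/
def IsIncAlleeMap (b A K : ℝ) (f : ℝ → ℝ) : Prop :=
  0 < A ∧ A < K ∧ K < b ∧
  MapsTo f (Icc 0 b) (Icc 0 b) ∧
  ContinuousOn f (Icc 0 b) ∧
  StrictMonoOn f (Icc 0 b) ∧
  f 0 = 0 ∧ f A = A ∧ f K = K ∧
  (∀ x ∈ Ioo 0 A ∪ Ioc K b, f x < x) ∧
  (∀ x ∈ Ioo A K, x < f x)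

/-- Truncation of the real line to the interval `[0, b]`. -/
noncomputable def chi (b x : ℝ) : ℝ := if x < 0 then 0 else if x ≤ b then x else b

/-- The randomly perturbed orbit: at each step apply `f` (on `true`) or `g` (on `false`),
add the noise, and truncate to `[0, b]`. -/
noncomputable def pertOrbit (b : ℝ) (f g : ℝ → ℝ) (y₀ : ℝ) :
    ℕ → (ℕ → Bool × ℝ) → ℝ
  | 0, _ => y₀
  | n + 1, ω =>
      if (ω n).1 then chi b (f (pertOrbit b f g y₀ n ω) + (ω n).2)
      else chi b (g (pertOrbit b f g y₀ n ω) + (ω n).2)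

namespace Stmt7Aux

lemma chi_mem_Icc {b : ℝ} (hb : 0 ≤ b) (x : ℝ) : chi b x ∈ Icc 0 b := by
  unfold chi; split_ifs with h1 h2 <;> constructor <;> linarith

lemma chi_eq_self {b x : ℝ} (h0 : 0 ≤ x) (hb : x ≤ b) : chi b x = x := by
  unfold chi; rw [if_neg (by linarith), if_pos hb]

lemma chi_lt {b x c : ℝ} (h : x < c) (h0 : 0 < c) : chi b x < c := by
  unfold chi; split_ifs <;> linarith

/-- One step of the random dynamics. -/
noncomputable def stepf (b : ℝ) (f g : ℝ → ℝ) (x : ℝ) (q : Bool × ℝ) : ℝ :=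
  if q.1 then chi b (f x + q.2) else chi b (g x + q.2)

lemma pertOrbit_succ (b : ℝ) (f g : ℝ → ℝ) (x : ℝ) (n : ℕ) (ω : ℕ → Bool × ℝ) :
    pertOrbit b f g x (n + 1) ω = stepf b f g (pertOrbit b f g x n ω) (ω n) := rfl

lemma pertOrbit_add (b : ℝ) (f g : ℝ → ℝ) (x : ℝ) (m n : ℕ) (ω : ℕ → Bool × ℝ) :
    pertOrbit b f g x (m + n) ω
      = pertOrbit b f g (pertOrbit b f g x m ω) n (fun k => ω (m + k)) := by
  induction n with
  | zero => rfl
  | succ n ih =>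
      have : m + (n + 1) = (m + n) + 1 := by omega
      rw [this, pertOrbit_succ, pertOrbit_succ, ih]

lemma pertOrbit_succ_left (b : ℝ) (f g : ℝ → ℝ) (x : ℝ) (n : ℕ) (ω : ℕ → Bool × ℝ) :
    pertOrbit b f g x (n + 1) ω
      = pertOrbit b f g (stepf b f g x (ω 0)) n (fun k => ω (k + 1)) := by
  have h := pertOrbit_add b f g x 1 n ω
  have h1 : pertOrbit b f g x 1 ω = stepf b f g x (ω 0) := rfl
  rw [Nat.add_comm 1 n] at h
  rw [h, h1]
  congr 1
  funext k
  rw [Nat.add_comm]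

lemma pertOrbit_mem_Icc {b : ℝ} (hb : 0 ≤ b) (f g : ℝ → ℝ) {x : ℝ} (hx : x ∈ Icc 0 b)
    (n : ℕ) (ω : ℕ → Bool × ℝ) : pertOrbit b f g x n ω ∈ Icc 0 b := by
  cases n with
  | zero => exact hx
  | succ n =>
      rw [pertOrbit_succ]
      unfold stepf
      split_ifs <;> exact chi_mem_Icc hb _

/-- Orbits only depend on the values of the maps on `[0,b]`. -/
lemma pertOrbit_congr {b : ℝ} (hb : 0 ≤ b) {f g f' g' : ℝ → ℝ}
    (hf : ∀ t ∈ Icc (0:ℝ) b, f t = f' t) (hg : ∀ t ∈ Icc (0:ℝ) b, g t = g' t)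
    {x : ℝ} (hx : x ∈ Icc 0 b) (n : ℕ) (ω : ℕ → Bool × ℝ) :
    pertOrbit b f g x n ω = pertOrbit b f' g' x n ω := by
  induction n with
  | zero => rfl
  | succ n ih =>
      have hmem := pertOrbit_mem_Icc hb f g hx n ω
      rw [pertOrbit_succ, pertOrbit_succ, ih]
      unfold stepf
      rw [← ih, ← hf _ hmem, ← hg _ hmem]

/-- A finite driving pattern: a coin value and an open noise window for each step. -/
abbrev Pat := List (Bool × ℝ × ℝ)

def Matches (P : Pat) (ω : ℕ → Bool × ℝ) : Prop :=
  ∀ k, (h : k < P.length) →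
    (ω k).1 = (P[k]'h).1 ∧ (ω k).2 ∈ Ioo (P[k]'h).2.1 (P[k]'h).2.2

def ValidPat (δ : ℝ) (P : Pat) : Prop :=
  ∀ e ∈ P, -δ ≤ e.2.1 ∧ e.2.1 < e.2.2 ∧ e.2.2 ≤ δ

def Drives (b : ℝ) (f g : ℝ → ℝ) (P : Pat) (V T : Set ℝ) : Prop :=
  ∀ x ∈ V ∩ Icc 0 b, ∀ ω, Matches P ω → pertOrbit b f g x P.length ω ∈ T

lemma matches_nil (ω : ℕ → Bool × ℝ) : Matches ([] : Pat) ω := by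
  intro k h; simp at h

lemma matches_cons {e : Bool × ℝ × ℝ} {P : Pat} {ω : ℕ → Bool × ℝ}
    (h : Matches (e :: P) ω) :
    ((ω 0).1 = e.1 ∧ (ω 0).2 ∈ Ioo e.2.1 e.2.2) ∧ Matches P (fun k => ω (k + 1)) := by
  constructor
  · exact h 0 (by simp)
  · intro k hk
    have := h (k + 1) (by simpa using Nat.succ_lt_succ hk)
    simpa using this

lemma matches_append_left {P Q : Pat} {ω : ℕ → Bool × ℝ}
    (h : Matches (P ++ Q) ω) : Matches P ω := by
  intro k hk
  have hk' : k < (P ++ Q).length := by simp; omega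
  have := h k hk'
  rwa [List.getElem_append_left hk] at this

lemma drives_nil {b : ℝ} {f g : ℝ → ℝ} {V T : Set ℝ}
    (h : ∀ x ∈ V ∩ Icc 0 b, x ∈ T) : Drives b f g ([] : Pat) V T := fun x hx ω _ => h x hx

lemma drives_cons {b : ℝ} {f g : ℝ → ℝ} {c₀ : Bool} {l u : ℝ} {P : Pat} {V V' T : Set ℝ}
    (hb : 0 ≤ b) (hP : Drives b f g P V' T)
    (hstep : ∀ x, x ∈ V → x ∈ Icc 0 b → ∀ ε ∈ Ioo l u,
      chi b ((if c₀ then f else g) x + ε) ∈ V') :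
    Drives b f g ((c₀, l, u) :: P) V T := by
  intro x hx ω hω
  obtain ⟨⟨hc, hε⟩, hM⟩ := matches_cons hω
  have hev : stepf b f g x (ω 0) = chi b ((if c₀ then f else g) x + (ω 0).2) := by
    unfold stepf; rw [hc]; cases c₀ <;> simp
  have hx1 : stepf b f g x (ω 0) ∈ V' := by rw [hev]; exact hstep x hx.1 hx.2 _ hε
  have hx1' : stepf b f g x (ω 0) ∈ Icc 0 b := by
    unfold stepf; split_ifs <;> exact chi_mem_Icc hb _
  have hlen : ((c₀, l, u) :: P).length = P.length + 1 := rfl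
  rw [hlen, pertOrbit_succ_left]
  exact hP _ ⟨hx1, hx1'⟩ _ hM

/-- The basic tube step: if `t'` is reachable from `x` by the map `φ` plus noise
in `(-δ, δ)`, then a whole neighbourhood of `x` is driven into any given open
neighbourhood of `t'` by a fixed nondegenerate noise window. -/
lemma tube_step {b δ : ℝ} (hδ : 0 < δ) (φ : ℝ → ℝ) (hφ : ContinuousOn φ (Icc 0 b))
    {x t' : ℝ} (hx : x ∈ Icc 0 b) (h1 : φ x - δ < t') (h2 : t' < φ x + δ)
    {V' : Set ℝ} (hV' : IsOpen V') (ht'V : t' ∈ V') (ht'0 : 0 < t') (ht'b : t' < b) :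
    ∃ V : Set ℝ, IsOpen V ∧ x ∈ V ∧ ∃ l u : ℝ, -δ ≤ l ∧ l < u ∧ u ≤ δ ∧
      ∀ x', x' ∈ V → x' ∈ Icc 0 b → ∀ ε ∈ Ioo l u, chi b (φ x' + ε) ∈ V' := by
  have hWopen : IsOpen (V' ∩ Ioo 0 b) := hV'.inter isOpen_Ioo
  have ht'W : t' ∈ V' ∩ Ioo 0 b := ⟨ht'V, ht'0, ht'b⟩
  obtain ⟨η, hη, hball⟩ := Metric.isOpen_iff.1 hWopen t' ht'W
  set e : ℝ := t' - φ x with he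
  have he1 : -δ < e := by simp [he]; linarith
  have he2 : e < δ := by simp [he]; linarith
  set l : ℝ := max (e - η / 3) ((e - δ) / 2) with hl
  set u : ℝ := min (e + η / 3) ((e + δ) / 2) with hu
  have hlu : l < u := by
    apply max_lt <;> apply lt_min <;> linarith
  have hld : -δ ≤ l := le_trans (by linarith) (le_max_right _ _)
  have hud : u ≤ δ := le_trans (min_le_right _ _) (by linarith)
  have hcont : ContinuousWithinAt φ (Icc 0 b) x := hφ x hx
  rw [Metric.continuousWithinAt_iff] at hcont
  obtain ⟨r, hr, hφr⟩ := hcont (η / 3) (by linarith)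
  refine ⟨Metric.ball x r, Metric.isOpen_ball, Metric.mem_ball_self hr, l, u, hld, hlu, hud, ?_⟩
  intro x' hx'V hx'I ε hε
  have hdist : dist (φ x') (φ x) < η / 3 := hφr hx'I (by simpa [Metric.mem_ball] using hx'V)
  have hεe : |ε - e| < η / 3 := by
    rw [abs_lt]
    constructor
    · have : e - η / 3 ≤ l := le_max_left _ _
      have := hε.1; linarith
    · have : u ≤ e + η / 3 := min_le_left _ _
      have := hε.2; linarith
  have hsum : |φ x' + ε - t'| < η := by
    have h3 : φ x' + ε - t' = (φ x' - φ x) + (ε - e) := by simp [he]; ring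
    rw [h3]
    calc |(φ x' - φ x) + (ε - e)| ≤ |φ x' - φ x| + |ε - e| := abs_add_le _ _
      _ < η / 3 + η / 3 := by
          rw [Real.dist_eq] at hdist
          exact add_lt_add hdist hεe
      _ < η := by linarith
  have hmem : φ x' + ε ∈ V' ∩ Ioo 0 b := by
    apply hball
    rw [Metric.mem_ball, Real.dist_eq]
    exact hsum
  rw [chi_eq_self (le_of_lt hmem.2.1) (le_of_lt hmem.2.2)]
  exact hmem.1


/-- Context: all the facts about the two maps and the five thresholds that the
deterministic "tube" constructions need. -/
structure Ctx where
  b : ℝ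
  δ : ℝ
  w₁ : ℝ
  w₂ : ℝ
  z₂ : ℝ
  w₃ : ℝ
  f : ℝ → ℝ
  g : ℝ → ℝ
  hb : 0 < b
  hδ : 0 < δ
  hfm : MapsTo f (Icc 0 b) (Icc 0 b)
  hgm : MapsTo g (Icc 0 b) (Icc 0 b)
  hfc : ContinuousOn f (Icc 0 b)
  hgc : ContinuousOn g (Icc 0 b)
  hfs : StrictMonoOn f (Icc 0 b)
  hgs : StrictMonoOn g (Icc 0 b)
  hw₁0 : 0 < w₁
  hw₁b : w₁ < b
  hw₂0 : 0 < w₂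
  hw₂z₂ : w₂ ≤ z₂
  hz₂0 : 0 < z₂
  hz₂w₃ : z₂ < w₃
  hw₃b : w₃ < b
  hfw₁ : f w₁ ≤ w₁ - δ
  hgw₁ : g w₁ ≤ w₁ - δ
  hfz₂ : z₂ + δ ≤ f z₂
  hgz₂ : z₂ + δ ≤ g z₂
  hfw₃ : f w₃ ≤ w₃ - δ
  hgw₃ : g w₃ ≤ w₃ - δ
  hdesc1 : ∀ t, 0 ≤ t → t < w₂ → min (f t) (g t) < t + δ
  hasc2 : ∀ t, w₂ ≤ t → t ≤ z₂ → t ≤ min (f t) (g t)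
  hub2 : ∀ t, w₂ ≤ t → t ≤ z₂ → min (f t) (g t) < w₃
  hlb3 : ∀ t, w₃ ≤ t → t ≤ b → z₂ ≤ min (f t) (g t)
  hdesc3 : ∀ t, w₃ ≤ t → t ≤ b → min (f t) (g t) < t
  hubB : ∀ t, 0 ≤ t → t ≤ w₂ → max (f t) (g t) < w₃

namespace Ctx

variable (C : Ctx)

lemma hw₂b : C.w₂ < C.b := lt_of_le_of_lt C.hw₂z₂ (lt_trans C.hz₂w₃ C.hw₃b)

lemma hz₂b : C.z₂ < C.b := lt_trans C.hz₂w₃ C.hw₃b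

/-- Invariance of the lower trap `[0, w₁)`. -/
lemma inv_lower {x ε : ℝ} (hx : x ∈ Ico 0 C.w₁) (hε : ε ∈ Ioo (-C.δ) C.δ) (q : Bool) :
    stepf C.b C.f C.g x (q, ε) ∈ Ico 0 C.w₁ := by
  have hxI : x ∈ Icc 0 C.b := ⟨hx.1, le_trans (le_of_lt hx.2) (le_of_lt C.hw₁b)⟩
  have hw₁I : C.w₁ ∈ Icc 0 C.b := ⟨le_of_lt C.hw₁0, le_of_lt C.hw₁b⟩
  have hf' : C.f x ≤ C.f C.w₁ := by
    rcases eq_or_lt_of_le hx.1 with h | h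
    · exact le_of_lt (C.hfs hxI hw₁I hx.2)
    · exact le_of_lt (C.hfs hxI hw₁I hx.2)
  have hg' : C.g x ≤ C.g C.w₁ := le_of_lt (C.hgs hxI hw₁I hx.2)
  have h1 : C.f x + ε < C.w₁ := by have := C.hfw₁; have := hε.2; linarith
  have h2 : C.g x + ε < C.w₁ := by have := C.hgw₁; have := hε.2; linarith
  unfold stepf
  have hb := le_of_lt C.hb
  split_ifs <;> exact ⟨(chi_mem_Icc hb _).1, chi_lt (by assumption) C.hw₁0⟩

/-- Invariance of the upper trap `(z₂, w₃)`. -/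
lemma inv_upper {x ε : ℝ} (hx : x ∈ Ioo C.z₂ C.w₃) (hε : ε ∈ Ioo (-C.δ) C.δ) (q : Bool) :
    stepf C.b C.f C.g x (q, ε) ∈ Ioo C.z₂ C.w₃ := by
  have hx0 : 0 < x := lt_trans C.hz₂0 hx.1
  have hxb : x < C.b := lt_trans hx.2 C.hw₃b
  have hxI : x ∈ Icc 0 C.b := ⟨le_of_lt hx0, le_of_lt hxb⟩
  have hz₂I : C.z₂ ∈ Icc 0 C.b := ⟨le_of_lt C.hz₂0, le_of_lt C.hz₂b⟩
  have hw₃I : C.w₃ ∈ Icc 0 C.b := ⟨le_trans (le_of_lt C.hz₂0) (le_of_lt C.hz₂w₃), le_of_lt C.hw₃b⟩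
  have hf1 : C.f C.z₂ < C.f x := C.hfs hz₂I hxI hx.1
  have hf2 : C.f x < C.f C.w₃ := C.hfs hxI hw₃I hx.2
  have hg1 : C.g C.z₂ < C.g x := C.hgs hz₂I hxI hx.1
  have hg2 : C.g x < C.g C.w₃ := C.hgs hxI hw₃I hx.2
  have hεl := hε.1; have hεu := hε.2
  have h1f : C.z₂ < C.f x + ε := by have := C.hfz₂; linarith
  have h2f : C.f x + ε < C.w₃ := by have := C.hfw₃; linarith
  have h1g : C.z₂ < C.g x + ε := by have := C.hgz₂; linarith
  have h2g : C.g x + ε < C.w₃ := by have := C.hgw₃; linarith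
  unfold stepf
  have hb' := C.hw₃b
  have hz := C.hz₂0
  split_ifs
  · rw [chi_eq_self (by linarith) (by linarith)]; exact ⟨h1f, h2f⟩
  · rw [chi_eq_self (by linarith) (by linarith)]; exact ⟨h1g, h2g⟩

/-- Once in a trap, with all noises in `(-δ, δ)` the orbit stays there forever. -/
lemma forever {T : Set ℝ}
    (hinv : ∀ x ∈ T, ∀ ε ∈ Ioo (-C.δ) C.δ, ∀ q : Bool, stepf C.b C.f C.g x (q, ε) ∈ T)
    {x : ℝ} {N : ℕ} {ω : ℕ → Bool × ℝ} (hN : pertOrbit C.b C.f C.g x N ω ∈ T)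
    (hω : ∀ k, (ω k).2 ∈ Ioo (-C.δ) C.δ) :
    ∀ n, N ≤ n → pertOrbit C.b C.f C.g x n ω ∈ T := by
  intro n hn
  induction n, hn using Nat.le_induction with
  | base => exact hN
  | succ n hn ih =>
      rw [pertOrbit_succ]
      have : ω n = ((ω n).1, (ω n).2) := rfl
      rw [this]
      exact hinv _ ih _ (hω n) _

/-- Padding a pattern with trivial steps keeps driving into an invariant target. -/
lemma drives_pad {P : Pat} {V T : Set ℝ}
    (hinv : ∀ x ∈ T, ∀ ε ∈ Ioo (-C.δ) C.δ, ∀ q : Bool, stepf C.b C.f C.g x (q, ε) ∈ T)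
    (hD : Drives C.b C.f C.g P V T) (j : ℕ) :
    Drives C.b C.f C.g (P ++ List.replicate j ((true : Bool), -C.δ, C.δ)) V T := by
  induction j with
  | zero => simpa using hD
  | succ j ih =>
      intro x hx ω hω
      have hsplit : P ++ List.replicate (j+1) ((true : Bool), -C.δ, C.δ)
          = (P ++ List.replicate j ((true : Bool), -C.δ, C.δ)) ++ [((true : Bool), -C.δ, C.δ)] := by
        rw [List.replicate_succ' , List.append_assoc]
      rw [hsplit]
      have hlen : ((P ++ List.replicate j ((true : Bool), -C.δ, C.δ)) ++ [((true : Bool), -C.δ, C.δ)]).length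
          = (P ++ List.replicate j ((true : Bool), -C.δ, C.δ)).length + 1 := by simp; omega
      rw [hlen, pertOrbit_succ]
      set Q := P ++ List.replicate j ((true : Bool), -C.δ, C.δ) with hQ
      have hprev : pertOrbit C.b C.f C.g x Q.length ω ∈ T :=
        ih x hx ω (matches_append_left (by rw [← hsplit]; exact hω))
      have hcon := hω Q.length (by simp [hsplit, hQ])
      have hval : (ω Q.length).2 ∈ Ioo (-C.δ) C.δ := by
        have hgetl : ((Q ++ [((true : Bool), -C.δ, C.δ)])[Q.length]'(by simp)) = ((true : Bool), -C.δ, C.δ) := by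
          simp
      -- extract window
        rw [hsplit] at hω
        have := (hω Q.length (by simp)).2
        rwa [hgetl] at this
      have : ω Q.length = ((ω Q.length).1, (ω Q.length).2) := rfl
      rw [this]
      exact hinv _ hprev _ hval _

/-- From anywhere in `[0, w₂)` a tube leads into the lower trap `[0, w₁)`. -/
lemma reach_lower : ∀ x, 0 ≤ x → x < C.w₂ → ∃ V P, IsOpen V ∧ x ∈ V ∧
    ValidPat C.δ P ∧ Drives C.b C.f C.g P V (Ico 0 C.w₁) := by
  intro x hx0 hxw
  have hδ := C.hδ
  have hw₂b := C.hw₂b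
  set c : ℝ := (x + C.w₂) / 2 with hc
  have hxc : x < c := by simp [hc]; linarith
  have hcw : c < C.w₂ := by simp [hc]; linarith
  have hc0 : 0 < c := by simp [hc]; linarith [C.hw₂0]
  have hcb : c < C.b := lt_trans hcw hw₂b
  have hIccsub : Icc (0:ℝ) c ⊆ Icc 0 C.b := Icc_subset_Icc le_rfl (le_of_lt hcb)
  set m : ℝ → ℝ := fun t => min (C.f t) (C.g t) with hm
  have hmc : ContinuousOn m (Icc 0 C.b) := by
    have := C.hfc.inf C.hgc
    simpa [hm] using this
  have hφc : ContinuousOn (fun t => t + C.δ - m t) (Icc 0 c) :=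
    ((continuousOn_id.add continuousOn_const).sub (hmc.mono hIccsub))
  obtain ⟨t₀, ht₀, hminon⟩ := isCompact_Icc.exists_isMinOn ⟨0, le_rfl, le_of_lt hc0⟩ hφc
  have hmin : ∀ t ∈ Icc 0 c, t₀ + C.δ - m t₀ ≤ t + C.δ - m t := fun t ht => isMinOn_iff.1 hminon t ht
  have hv : 0 < t₀ + C.δ - m t₀ := by
    have := C.hdesc1 t₀ ht₀.1 (lt_of_le_of_lt ht₀.2 hcw)
    simp only [hm]; linarith
  set γ : ℝ := min ((t₀ + C.δ - m t₀) / 2) (C.δ / 2) with hγ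
  have hγ0 : 0 < γ := lt_min (by linarith) (by linarith)
  have hγδ : γ ≤ C.δ / 2 := min_le_right _ _
  have hmarg : ∀ t ∈ Icc 0 c, 2 * γ ≤ t + C.δ - m t := by
    intro t ht
    have h1 := hmin t ht
    have h2 : γ ≤ (t₀ + C.δ - m t₀) / 2 := min_le_left _ _
    linarith
  obtain ⟨n, hn⟩ : ∃ n : ℕ, x < C.w₁ + n * γ := by
    obtain ⟨n, hn⟩ := exists_nat_gt ((x - C.w₁) / γ)
    exact ⟨n, by have := (div_lt_iff₀ hγ0).1 hn; linarith⟩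
  have KEY : ∀ n : ℕ, ∀ t, 0 ≤ t → t < c → t < C.w₁ + n * γ → ∃ V P, IsOpen V ∧ t ∈ V ∧
      ValidPat C.δ P ∧ Drives C.b C.f C.g P V (Ico 0 C.w₁) := by
    intro n
    induction n with
    | zero =>
        intro t ht0 htc htw
        refine ⟨Iio C.w₁, ([] : Pat), isOpen_Iio, ?_, ?_, drives_nil ?_⟩
        · simp only [mem_Iio]; push_cast at htw; linarith
        · intro e he; simp at he
        · intro y hy; exact ⟨hy.2.1, hy.1⟩
    | succ n ih =>
        intro t ht0 htc htw
        have hcast : ((n + 1 : ℕ) : ℝ) = (n : ℝ) + 1 := by push_cast; ring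
        rw [hcast] at htw
        by_cases htriv : t < C.w₁
        · refine ⟨Iio C.w₁, ([] : Pat), isOpen_Iio, htriv, ?_, drives_nil ?_⟩
          · intro e he; simp at he
          · intro y hy; exact ⟨hy.2.1, hy.1⟩
        push_neg at htriv
        set c₀ : Bool := decide (C.f t ≤ C.g t) with hc₀
        set φ : ℝ → ℝ := if c₀ then C.f else C.g with hφ
        have hφm : φ t = m t := by
          by_cases h : C.f t ≤ C.g t
          · simp [hφ, hc₀, h, hm, min_eq_left h]
          · simp [hφ, hc₀, h, hm, min_eq_right (le_of_lt (lt_of_not_ge h))]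
        have hφcon : ContinuousOn φ (Icc 0 C.b) := by
          rcases Bool.eq_false_or_eq_true c₀ with h | h <;> simp [hφ, h]
          exacts [C.hfc, C.hgc]
        have htI : t ∈ Icc 0 C.b := ⟨ht0, by linarith⟩
        have hm0 : 0 ≤ m t := le_min (C.hfm htI).1 (C.hgm htI).1
        have hmarg' : 2 * γ ≤ t + C.δ - m t := hmarg t ⟨ht0, le_of_lt htc⟩
        by_cases hA : m t - C.δ < C.w₁
        · -- we can land in the trap in one step
          set a1 : ℝ := max (m t - C.δ) 0 with ha1
          set a2 : ℝ := min (m t + C.δ) C.w₁ with ha2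
          have h12 : a1 < a2 := by
            apply max_lt <;> apply lt_min
            · linarith
            · exact hA
            · linarith
            · exact C.hw₁0
          set t' : ℝ := (a1 + a2) / 2 with ht'
          have ht'1 : a1 < t' := by simp [ht']; linarith
          have ht'2 : t' < a2 := by simp [ht']; linarith
          have hstep1 : φ t - C.δ < t' := by
            rw [hφm]; exact lt_of_le_of_lt (le_max_left _ _) ht'1
          have hstep2 : t' < φ t + C.δ := by
            rw [hφm]; exact lt_of_lt_of_le ht'2 (min_le_left _ _)
          have ht'0 : 0 < t' := lt_of_le_of_lt (le_max_right _ _) ht'1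
          have ht'w₁ : t' < C.w₁ := lt_of_lt_of_le ht'2 (min_le_right _ _)
          obtain ⟨V, hVo, hxV, l, u, hl, hlu, hu, hdrive⟩ :=
            tube_step C.hδ φ hφcon htI hstep1 hstep2 isOpen_Ioo
              (⟨ht'0, ht'w₁⟩ : t' ∈ Ioo 0 C.w₁) ht'0 (lt_trans ht'w₁ C.hw₁b)
          refine ⟨V, [(c₀, l, u)], hVo, hxV, ?_, ?_⟩
          · intro e he; simp at he; subst he; exact ⟨hl, hlu, hu⟩
          · refine drives_cons (V' := Ioo 0 C.w₁) (le_of_lt C.hb) (drives_nil ?_) ?_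
            · intro y hy; exact ⟨le_of_lt hy.1.1, hy.1.2⟩
            · exact hdrive
        · -- intermediate descent step
          push_neg at hA
          set t' : ℝ := min (m t + C.δ - γ) (t - γ) with ht'
          have h1 : m t - C.δ < t' := by
            apply lt_min <;> linarith
          have h2 : t' < m t + C.δ := lt_of_le_of_lt (min_le_left _ _) (by linarith)
          have ht'w₁ : C.w₁ ≤ t' := by
            apply le_min <;> linarith
          have ht'c : t' < c := lt_of_le_of_lt (min_le_right _ _) (by linarith)
          have ht'n : t' < C.w₁ + n * γ := by
            have := min_le_right (m t + C.δ - γ) (t - γ); simp only [ht']; linarith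
          obtain ⟨V', P', hV'o, ht'V', hval', hdrv'⟩ :=
            ih t' (le_trans (le_of_lt C.hw₁0) ht'w₁) ht'c ht'n
          have hstep1 : φ t - C.δ < t' := by rw [hφm]; exact h1
          have hstep2 : t' < φ t + C.δ := by rw [hφm]; exact h2
          obtain ⟨V, hVo, hxV, l, u, hl, hlu, hu, hdrive⟩ :=
            tube_step C.hδ φ hφcon htI hstep1 hstep2 hV'o ht'V'
              (lt_of_lt_of_le C.hw₁0 ht'w₁) (lt_trans ht'c hcb)
          refine ⟨V, (c₀, l, u) :: P', hVo, hxV, ?_, drives_cons (le_of_lt C.hb) hdrv' hdrive⟩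
          intro e he
          rcases List.mem_cons.1 he with h | h
          · subst h; exact ⟨hl, hlu, hu⟩
          · exact hval' e h
  exact KEY n x hx0 hxc hn

/-- From anywhere in `[w₂, z₂]` a tube leads into the upper trap `(z₂, w₃)`. -/
lemma reach_mid : ∀ x, C.w₂ ≤ x → x ≤ C.z₂ → ∃ V P, IsOpen V ∧ x ∈ V ∧
    ValidPat C.δ P ∧ Drives C.b C.f C.g P V (Ioo C.z₂ C.w₃) := by
  have hδ := C.hδ
  have hz₂w₃ := C.hz₂w₃
  set γ : ℝ := min (C.δ / 2) ((C.w₃ - C.z₂) / 2) with hγ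
  have hγ0 : 0 < γ := lt_min (by linarith) (by linarith)
  have hγδ : γ ≤ C.δ / 2 := min_le_left _ _
  have hγw : γ ≤ (C.w₃ - C.z₂) / 2 := min_le_right _ _
  have KEY : ∀ n : ℕ, ∀ t, C.w₂ ≤ t → t ≤ C.z₂ → C.z₂ < t + n * γ → ∃ V P, IsOpen V ∧ t ∈ V ∧
      ValidPat C.δ P ∧ Drives C.b C.f C.g P V (Ioo C.z₂ C.w₃) := by
    intro n
    induction n with
    | zero => intro t _ htz h; push_cast at h; linarith
    | succ n ih =>
        intro t htw htz hn
        have hcast : ((n + 1 : ℕ) : ℝ) = (n : ℝ) + 1 := by push_cast; ring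
        rw [hcast] at hn
        have htI : t ∈ Icc 0 C.b :=
          ⟨le_trans (le_of_lt C.hw₂0) htw, le_trans htz (le_of_lt C.hz₂b)⟩
        have hmge : t ≤ min (C.f t) (C.g t) := C.hasc2 t htw htz
        have hmlt : min (C.f t) (C.g t) < C.w₃ := C.hub2 t htw htz
        set c₀ : Bool := decide (C.f t ≤ C.g t) with hc₀
        set φ : ℝ → ℝ := if c₀ then C.f else C.g with hφ
        have hφm : φ t = min (C.f t) (C.g t) := by
          by_cases h : C.f t ≤ C.g t
          · simp [hφ, hc₀, h, min_eq_left h]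
          · simp [hφ, hc₀, h, min_eq_right (le_of_lt (lt_of_not_ge h))]
        have hφcon : ContinuousOn φ (Icc 0 C.b) := by
          rcases Bool.eq_false_or_eq_true c₀ with h | h <;> simp [hφ, h]
          exacts [C.hfc, C.hgc]
        set mt : ℝ := min (C.f t) (C.g t) with hmt
        set t' : ℝ := max (mt - C.δ + γ) (t + γ) with ht'
        have h1 : mt - C.δ < t' := lt_of_lt_of_le (by linarith) (le_max_left _ _)
        have h2 : t' < mt + C.δ := max_lt (by linarith) (by linarith)
        have ht'w₃ : t' < C.w₃ := max_lt (by linarith) (by linarith)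
        have ht'0 : 0 < t' := lt_of_lt_of_le (by linarith [C.hw₂0]) (le_max_right _ _)
        have ht'b : t' < C.b := lt_trans ht'w₃ C.hw₃b
        have htt' : t + γ ≤ t' := le_max_right _ _
        have hstep1 : φ t - C.δ < t' := by rw [hφm]; exact h1
        have hstep2 : t' < φ t + C.δ := by rw [hφm]; exact h2
        by_cases hfin : C.z₂ < t'
        · obtain ⟨V, hVo, hxV, l, u, hl, hlu, hu, hdrive⟩ :=
            tube_step C.hδ φ hφcon htI hstep1 hstep2 isOpen_Ioo
              (⟨hfin, ht'w₃⟩ : t' ∈ Ioo C.z₂ C.w₃) ht'0 ht'b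
          refine ⟨V, [(c₀, l, u)], hVo, hxV, ?_, ?_⟩
          · intro e he; simp at he; subst he; exact ⟨hl, hlu, hu⟩
          · refine drives_cons (V' := Ioo C.z₂ C.w₃) (le_of_lt C.hb) (drives_nil ?_) hdrive
            exact fun y hy => hy.1
        · push_neg at hfin
          obtain ⟨V', P', hV'o, ht'V', hval', hdrv'⟩ :=
            ih t' (le_trans (by linarith) htt') hfin (by linarith)
          obtain ⟨V, hVo, hxV, l, u, hl, hlu, hu, hdrive⟩ :=
            tube_step C.hδ φ hφcon htI hstep1 hstep2 hV'o ht'V' ht'0 ht'b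
          refine ⟨V, (c₀, l, u) :: P', hVo, hxV, ?_, drives_cons (le_of_lt C.hb) hdrv' hdrive⟩
          intro e he
          rcases List.mem_cons.1 he with h | h
          · subst h; exact ⟨hl, hlu, hu⟩
          · exact hval' e h
  intro x hxw hxz
  obtain ⟨n, hn⟩ : ∃ n : ℕ, C.z₂ < x + n * γ := by
    obtain ⟨n, hn⟩ := exists_nat_gt ((C.z₂ - x) / γ)
    exact ⟨n, by have := (div_lt_iff₀ hγ0).1 hn; linarith⟩
  exact KEY n x hxw hxz hn

/-- From anywhere in `(z₂, b]` a tube leads into the upper trap `(z₂, w₃)`. -/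
lemma reach_top : ∀ x, C.z₂ < x → x ≤ C.b → ∃ V P, IsOpen V ∧ x ∈ V ∧
    ValidPat C.δ P ∧ Drives C.b C.f C.g P V (Ioo C.z₂ C.w₃) := by
  have hδ := C.hδ
  have hz₂w₃ := C.hz₂w₃
  set γ : ℝ := min (C.δ / 2) ((C.w₃ - C.z₂) / 2) with hγ
  have hγ0 : 0 < γ := lt_min (by linarith) (by linarith)
  have hγδ : γ ≤ C.δ / 2 := min_le_left _ _
  have hγw : γ ≤ (C.w₃ - C.z₂) / 2 := min_le_right _ _
  have KEY : ∀ n : ℕ, ∀ t, C.z₂ < t → t ≤ C.b → t < C.w₃ + n * γ → ∃ V P, IsOpen V ∧ t ∈ V ∧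
      ValidPat C.δ P ∧ Drives C.b C.f C.g P V (Ioo C.z₂ C.w₃) := by
    intro n
    induction n with
    | zero =>
        intro t htz htb hn
        push_cast at hn
        refine ⟨Ioo C.z₂ C.w₃, ([] : Pat), isOpen_Ioo, ⟨htz, by linarith⟩, ?_,
          drives_nil fun y hy => hy.1⟩
        intro e he; simp at he
    | succ n ih =>
        intro t htz htb hn
        have hcast : ((n + 1 : ℕ) : ℝ) = (n : ℝ) + 1 := by push_cast; ring
        rw [hcast] at hn
        by_cases htriv : t < C.w₃
        · refine ⟨Ioo C.z₂ C.w₃, ([] : Pat), isOpen_Ioo, ⟨htz, htriv⟩, ?_,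
            drives_nil fun y hy => hy.1⟩
          intro e he; simp at he
        push_neg at htriv
        have htI : t ∈ Icc 0 C.b := ⟨le_of_lt (lt_trans C.hz₂0 htz), htb⟩
        have hmge : C.z₂ ≤ min (C.f t) (C.g t) := C.hlb3 t htriv htb
        have hmlt : min (C.f t) (C.g t) < t := C.hdesc3 t htriv htb
        set c₀ : Bool := decide (C.f t ≤ C.g t) with hc₀
        set φ : ℝ → ℝ := if c₀ then C.f else C.g with hφ
        have hφm : φ t = min (C.f t) (C.g t) := by
          by_cases h : C.f t ≤ C.g t
          · simp [hφ, hc₀, h, min_eq_left h]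
          · simp [hφ, hc₀, h, min_eq_right (le_of_lt (lt_of_not_ge h))]
        have hφcon : ContinuousOn φ (Icc 0 C.b) := by
          rcases Bool.eq_false_or_eq_true c₀ with h | h <;> simp [hφ, h]
          exacts [C.hfc, C.hgc]
        set mt : ℝ := min (C.f t) (C.g t) with hmt
        set t' : ℝ := min (mt + C.δ - γ) (t - γ) with ht'
        have h1 : mt - C.δ < t' := lt_min (by linarith) (by linarith)
        have h2 : t' < mt + C.δ := lt_of_le_of_lt (min_le_left _ _) (by linarith)
        have ht'z₂ : C.z₂ < t' := lt_min (by linarith) (by linarith [C.hz₂w₃])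
        have ht'b : t' ≤ C.b := le_trans (min_le_right _ _) (by linarith)
        have ht'n : t' < C.w₃ + n * γ := by
          have := min_le_right (mt + C.δ - γ) (t - γ); simp only [ht']; linarith
        obtain ⟨V', P', hV'o, ht'V', hval', hdrv'⟩ := ih t' ht'z₂ ht'b ht'n
        have hstep1 : φ t - C.δ < t' := by rw [hφm]; exact h1
        have hstep2 : t' < φ t + C.δ := by rw [hφm]; exact h2
        obtain ⟨V, hVo, hxV, l, u, hl, hlu, hu, hdrive⟩ :=
          tube_step C.hδ φ hφcon htI hstep1 hstep2 hV'o ht'V' (lt_trans C.hz₂0 ht'z₂)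
            (lt_of_le_of_lt (min_le_right _ _) (by linarith))
        refine ⟨V, (c₀, l, u) :: P', hVo, hxV, ?_, drives_cons (le_of_lt C.hb) hdrv' hdrive⟩
        intro e he
        rcases List.mem_cons.1 he with h | h
        · subst h; exact ⟨hl, hlu, hu⟩
        · exact hval' e h
  intro x hxz hxb
  obtain ⟨n, hn⟩ : ∃ n : ℕ, x < C.w₃ + n * γ := by
    obtain ⟨n, hn⟩ := exists_nat_gt ((x - C.w₃) / γ)
    exact ⟨n, by have := (div_lt_iff₀ hγ0).1 hn; linarith⟩
  exact KEY n x hxz hxb hn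

/-- From a point `a₀ ∈ (0, w₂)` where the "go up" property holds on `[a₀, w₂]`,
a tube leads into the upper trap `(z₂, w₃)`. -/
lemma reach_up_from (a₀ : ℝ) (ha0 : 0 < a₀) (haw : a₀ < C.w₂)
    (hprop : ∀ t, a₀ ≤ t → t ≤ C.w₂ → t - C.δ < max (C.f t) (C.g t)) :
    ∃ V P, IsOpen V ∧ a₀ ∈ V ∧ ValidPat C.δ P ∧ Drives C.b C.f C.g P V (Ioo C.z₂ C.w₃) := by
  have hδ := C.hδ
  have hz₂w₃ := C.hz₂w₃
  have hw₂b := C.hw₂b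
  set M : ℝ → ℝ := fun t => max (C.f t) (C.g t) with hM
  have hMc : ContinuousOn M (Icc 0 C.b) := by
    have := C.hfc.sup C.hgc
    simpa [hM] using this
  have hIccsub : Icc a₀ C.w₂ ⊆ Icc 0 C.b :=
    Icc_subset_Icc (le_of_lt ha0) (le_of_lt hw₂b)
  have hψc : ContinuousOn (fun t => M t + C.δ - t) (Icc a₀ C.w₂) :=
    (((hMc.mono hIccsub).add continuousOn_const).sub continuousOn_id)
  obtain ⟨t₀, ht₀, hminon⟩ := isCompact_Icc.exists_isMinOn ⟨a₀, le_rfl, le_of_lt haw⟩ hψc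
  have hmin : ∀ t ∈ Icc a₀ C.w₂, M t₀ + C.δ - t₀ ≤ M t + C.δ - t :=
    fun t ht => isMinOn_iff.1 hminon t ht
  have hv : 0 < M t₀ + C.δ - t₀ := by
    have := hprop t₀ ht₀.1 ht₀.2
    simp only [hM]; linarith
  set γ : ℝ := min ((M t₀ + C.δ - t₀) / 2) (min (C.δ / 2) ((C.w₃ - C.z₂) / 2)) with hγ
  have hγ0 : 0 < γ := lt_min (by linarith) (lt_min (by linarith) (by linarith))
  have hγδ : γ ≤ C.δ / 2 := le_trans (min_le_right _ _) (min_le_left _ _)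
  have hγw : γ ≤ (C.w₃ - C.z₂) / 2 := le_trans (min_le_right _ _) (min_le_right _ _)
  have hmarg : ∀ t ∈ Icc a₀ C.w₂, 2 * γ ≤ M t + C.δ - t := by
    intro t ht
    have h1 := hmin t ht
    have h2 : γ ≤ (M t₀ + C.δ - t₀) / 2 := min_le_left _ _
    linarith
  have KEY : ∀ n : ℕ, ∀ t, a₀ ≤ t → t ≤ C.w₂ → C.w₂ < t + n * γ → ∃ V P, IsOpen V ∧ t ∈ V ∧
      ValidPat C.δ P ∧ Drives C.b C.f C.g P V (Ioo C.z₂ C.w₃) := by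
    intro n
    induction n with
    | zero => intro t _ htz h; push_cast at h; linarith
    | succ n ih =>
        intro t hta htw hn
        have hcast : ((n + 1 : ℕ) : ℝ) = (n : ℝ) + 1 := by push_cast; ring
        rw [hcast] at hn
        have htI : t ∈ Icc 0 C.b := ⟨le_trans (le_of_lt ha0) hta, by linarith⟩
        have hmarg' : 2 * γ ≤ M t + C.δ - t := hmarg t ⟨hta, htw⟩
        have hMlt : M t < C.w₃ := C.hubB t htI.1 htw
        set c₀ : Bool := decide (C.g t ≤ C.f t) with hc₀
        set φ : ℝ → ℝ := if c₀ then C.f else C.g with hφ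
        have hφm : φ t = M t := by
          by_cases h : C.g t ≤ C.f t
          · simp [hφ, hc₀, h, hM, max_eq_left h]
          · simp [hφ, hc₀, h, hM, max_eq_right (le_of_lt (lt_of_not_ge h))]
        have hφcon : ContinuousOn φ (Icc 0 C.b) := by
          rcases Bool.eq_false_or_eq_true c₀ with h | h <;> simp [hφ, h]
          exacts [C.hfc, C.hgc]
        set t' : ℝ := max (M t - C.δ + γ) (t + γ) with ht'
        have h1 : M t - C.δ < t' := lt_of_lt_of_le (by linarith) (le_max_left _ _)
        have h2 : t' < M t + C.δ := max_lt (by linarith) (by linarith)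
        have ht'w₃ : t' < C.w₃ := max_lt (by linarith) (by linarith [C.hw₂z₂])
        have ht'0 : 0 < t' := lt_of_lt_of_le (by linarith) (le_max_right _ _)
        have ht'b : t' < C.b := lt_trans ht'w₃ C.hw₃b
        have htt' : t + γ ≤ t' := le_max_right _ _
        have hstep1 : φ t - C.δ < t' := by rw [hφm]; exact h1
        have hstep2 : t' < φ t + C.δ := by rw [hφm]; exact h2
        by_cases hfin : C.z₂ < t'
        · obtain ⟨V, hVo, hxV, l, u, hl, hlu, hu, hdrive⟩ :=
            tube_step C.hδ φ hφcon htI hstep1 hstep2 isOpen_Ioo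
              (⟨hfin, ht'w₃⟩ : t' ∈ Ioo C.z₂ C.w₃) ht'0 ht'b
          refine ⟨V, [(c₀, l, u)], hVo, hxV, ?_, ?_⟩
          · intro e he; simp at he; subst he; exact ⟨hl, hlu, hu⟩
          · refine drives_cons (V' := Ioo C.z₂ C.w₃) (le_of_lt C.hb) (drives_nil ?_) hdrive
            exact fun y hy => hy.1
        push_neg at hfin
        by_cases hmid : C.w₂ ≤ t'
        · obtain ⟨V', P', hV'o, ht'V', hval', hdrv'⟩ := C.reach_mid t' hmid hfin
          obtain ⟨V, hVo, hxV, l, u, hl, hlu, hu, hdrive⟩ :=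
            tube_step C.hδ φ hφcon htI hstep1 hstep2 hV'o ht'V' ht'0 ht'b
          refine ⟨V, (c₀, l, u) :: P', hVo, hxV, ?_, drives_cons (le_of_lt C.hb) hdrv' hdrive⟩
          intro e he
          rcases List.mem_cons.1 he with h | h
          · subst h; exact ⟨hl, hlu, hu⟩
          · exact hval' e h
        · push_neg at hmid
          obtain ⟨V', P', hV'o, ht'V', hval', hdrv'⟩ :=
            ih t' (le_trans (by linarith) htt') (le_of_lt hmid) (by linarith)
          obtain ⟨V, hVo, hxV, l, u, hl, hlu, hu, hdrive⟩ :=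
            tube_step C.hδ φ hφcon htI hstep1 hstep2 hV'o ht'V' ht'0 ht'b
          refine ⟨V, (c₀, l, u) :: P', hVo, hxV, ?_, drives_cons (le_of_lt C.hb) hdrv' hdrive⟩
          intro e he
          rcases List.mem_cons.1 he with h | h
          · subst h; exact ⟨hl, hlu, hu⟩
          · exact hval' e h
  obtain ⟨n, hn⟩ : ∃ n : ℕ, C.w₂ < a₀ + n * γ := by
    obtain ⟨n, hn⟩ := exists_nat_gt ((C.w₂ - a₀) / γ)
    exact ⟨n, by have := (div_lt_iff₀ hγ0).1 hn; linarith⟩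
  exact KEY n a₀ le_rfl (le_of_lt haw) hn

/-- Every point of `[0, b]` has a neighbourhood driven into one of the traps. -/
lemma cover : ∀ x : ℝ, ∃ V P, IsOpen V ∧ (x ∈ Icc 0 C.b → x ∈ V) ∧ ValidPat C.δ P ∧
    (Drives C.b C.f C.g P V (Ico 0 C.w₁) ∨ Drives C.b C.f C.g P V (Ioo C.z₂ C.w₃)) := by
  intro x
  by_cases hx : x ∈ Icc 0 C.b
  · rcases lt_or_ge x C.w₂ with h1 | h1
    · obtain ⟨V, P, hVo, hxV, hval, hdr⟩ := C.reach_lower x hx.1 h1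
      exact ⟨V, P, hVo, fun _ => hxV, hval, Or.inl hdr⟩
    · rcases le_or_gt x C.z₂ with h2 | h2
      · obtain ⟨V, P, hVo, hxV, hval, hdr⟩ := C.reach_mid x h1 h2
        exact ⟨V, P, hVo, fun _ => hxV, hval, Or.inr hdr⟩
      · obtain ⟨V, P, hVo, hxV, hval, hdr⟩ := C.reach_top x h2 hx.2
        exact ⟨V, P, hVo, fun _ => hxV, hval, Or.inr hdr⟩
  · refine ⟨∅, ([] : Pat), isOpen_empty, fun h => absurd h hx, ?_, Or.inl ?_⟩
    · intro e he; simp at he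
    · intro y hy; exact absurd hy.1 (notMem_empty y)

end Ctx

section Meas

abbrev Ωt := ℕ → Bool × ℝ

noncomputable def clampI (b : ℝ) : ℝ → ℝ := fun t => max 0 (min t b)

lemma clampI_continuous (b : ℝ) : Continuous (clampI b) :=
  continuous_const.max (continuous_id.min continuous_const)

lemma clampI_mem {b : ℝ} (hb : 0 ≤ b) (t : ℝ) : clampI b t ∈ Icc 0 b :=
  ⟨le_max_left _ _, max_le hb (min_le_right _ _)⟩

lemma clampI_eq {b t : ℝ} (ht : t ∈ Icc (0:ℝ) b) : clampI b t = t := by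
  unfold clampI; rw [min_eq_left ht.2, max_eq_right ht.1]

lemma measurable_chi (b : ℝ) : Measurable (chi b) := by
  have h : chi b = fun x => if x < 0 then 0 else if x ≤ b then x else b := rfl
  rw [h]
  refine Measurable.ite ?_ measurable_const ?_
  · exact measurableSet_Iio
  · exact Measurable.ite measurableSet_Iic measurable_id measurable_const

/-- The natural filtration of the coordinate process. -/
def Filt (n : ℕ) : MeasurableSpace Ωt :=
  ⨆ i ∈ {i : ℕ | i < n}, MeasurableSpace.comap (fun ω : Ωt => ω i) inferInstance

lemma Filt_le_ambient (n : ℕ) : Filt n ≤ (inferInstance : MeasurableSpace Ωt) := by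
  apply iSup₂_le
  intro i _
  exact measurable_iff_comap_le.1 (measurable_pi_apply i)

lemma Filt_mono {m n : ℕ} (h : m ≤ n) : Filt m ≤ Filt n := by
  apply iSup₂_le
  intro i hi
  exact le_biSup (fun i => MeasurableSpace.comap (fun ω : Ωt => ω i) inferInstance)
    (show i ∈ {i : ℕ | i < n} from lt_of_lt_of_le hi h)

lemma measurable_coord_filt {i n : ℕ} (h : i < n) :
    Measurable[Filt n] (fun ω : Ωt => ω i) :=
  measurable_iff_comap_le.2
    (le_biSup (fun i => MeasurableSpace.comap (fun ω : Ωt => ω i) inferInstance)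
      (show i ∈ {i : ℕ | i < n} from h))

lemma pertOrbit_measurable_filt {b : ℝ} {f g : ℝ → ℝ} (hf : Measurable f) (hg : Measurable g)
    (x : ℝ) : ∀ n, Measurable[Filt n] (fun ω : Ωt => pertOrbit b f g x n ω) := by
  intro n
  induction n with
  | zero => exact measurable_const
  | succ n ih =>
      have hstep : Measurable (fun q : ℝ × (Bool × ℝ) =>
          if q.2.1 then chi b (f q.1 + q.2.2) else chi b (g q.1 + q.2.2)) := by
        refine Measurable.ite ?_ ?_ ?_
        · exact (measurable_fst.comp measurable_snd) (measurableSet_singleton true)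
        · exact (measurable_chi b).comp ((hf.comp measurable_fst).add measurable_snd.snd)
        · exact (measurable_chi b).comp ((hg.comp measurable_fst).add measurable_snd.snd)
      have heq : (fun ω : Ωt => pertOrbit b f g x (n+1) ω)
          = (fun q : ℝ × (Bool × ℝ) =>
              if q.2.1 then chi b (f q.1 + q.2.2) else chi b (g q.1 + q.2.2))
            ∘ (fun ω : Ωt => (pertOrbit b f g x n ω, ω n)) := rfl
      rw [heq]
      exact hstep.comp
        ((ih.mono (Filt_mono (Nat.le_succ n)) le_rfl).prodMk
          (measurable_coord_filt (Nat.lt_succ_self n)))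

lemma pertOrbit_measurable {b : ℝ} {f g : ℝ → ℝ} (hf : Measurable f) (hg : Measurable g)
    (x : ℝ) (n : ℕ) : Measurable (fun ω : Ωt => pertOrbit b f g x n ω) :=
  (pertOrbit_measurable_filt hf hg x n).mono (Filt_le_ambient n) le_rfl

/-- The coordinate constraint set of a pattern entry. -/
def entrySet (e : Bool × ℝ × ℝ) : Set (Bool × ℝ) := {e.1} ×ˢ Ioo e.2.1 e.2.2

def patSet (P : Pat) (k : ℕ) : Set (Bool × ℝ) :=
  if h : k < P.length then entrySet (P[k]'h) else univ

lemma measurableSet_patSet (P : Pat) (k : ℕ) : MeasurableSet (patSet P k) := by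
  unfold patSet
  split
  · exact (measurableSet_singleton _).prod measurableSet_Ioo
  · exact MeasurableSet.univ

/-- The event that the coordinates starting at time `j` match the pattern `P`. -/
def matchEvent (j : ℕ) (P : Pat) : Set Ωt := {ω | Matches P (fun k => ω (j + k))}

lemma matchEvent_eq (j : ℕ) (P : Pat) : matchEvent j P
    = ⋂ k ∈ Finset.range P.length, (fun ω : Ωt => ω (j + k)) ⁻¹' patSet P k := by
  ext ω
  simp only [matchEvent, mem_setOf_eq, mem_iInter, Finset.mem_range, mem_preimage]
  constructor
  · intro h k hk
    rw [patSet, dif_pos hk]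
    obtain ⟨h1, h2⟩ := h k hk
    exact ⟨mem_singleton_iff.2 h1, h2⟩
  · intro h k hk
    have := h k hk
    rw [patSet, dif_pos hk] at this
    exact ⟨mem_singleton_iff.1 this.1, this.2⟩

lemma measurableSet_matchEvent (j : ℕ) (P : Pat) : MeasurableSet (matchEvent j P) := by
  rw [matchEvent_eq]
  exact MeasurableSet.biInter (Finset.range P.length).countable_toSet
    fun k _ => (measurable_pi_apply (j + k)) (measurableSet_patSet P k)

lemma matchEvent_measurable_tail (j : ℕ) (P : Pat) (n : ℕ) (hn : n ≤ j) :
    MeasurableSet[⨆ i ∈ {i : ℕ | i < n}ᶜ, MeasurableSpace.comap (fun ω : Ωt => ω i) inferInstance]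
      (matchEvent j P) := by
  rw [matchEvent_eq]
  refine MeasurableSet.biInter (Finset.range P.length).countable_toSet fun k _ => ?_
  have hle : MeasurableSpace.comap (fun ω : Ωt => ω (j + k)) inferInstance
      ≤ ⨆ i ∈ {i : ℕ | i < n}ᶜ, MeasurableSpace.comap (fun ω : Ωt => ω i) inferInstance := by
    refine le_biSup (fun i => MeasurableSpace.comap (fun ω : Ωt => ω i) inferInstance) ?_
    simp only [mem_compl_iff, mem_setOf_eq, not_lt]
    omega
  exact hle _ ⟨patSet P k, measurableSet_patSet P k, rfl⟩

lemma matchEvent_measurable_filt (j : ℕ) (P : Pat) (n : ℕ) (hn : j + P.length ≤ n) :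
    MeasurableSet[Filt n] (matchEvent j P) := by
  rw [matchEvent_eq]
  refine MeasurableSet.biInter (Finset.range P.length).countable_toSet fun k hk => ?_
  have hk' : k < P.length := by
    have : k ∈ Finset.range P.length := hk
    simpa using this
  exact (measurable_coord_filt (show j + k < n by omega)) (measurableSet_patSet P k)

lemma matchEvent_prob {μ : Measure Ωt}
    (hindep : iIndepFun (fun n (ω : Ωt) => ω n) μ) (j : ℕ) (P : Pat) :
    μ (matchEvent j P)
      = ∏ k ∈ Finset.range P.length, μ ((fun ω : Ωt => ω (j + k)) ⁻¹' patSet P k) := by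
  rw [matchEvent_eq]
  have h1 : (⋂ k ∈ Finset.range P.length, (fun ω : Ωt => ω (j + k)) ⁻¹' patSet P k)
      = ⋂ m ∈ (Finset.range P.length).image (j + ·),
          (fun ω : Ωt => ω m) ⁻¹' patSet P (m - j) := by
    ext ω
    simp only [mem_iInter, Finset.mem_image, Finset.mem_range, mem_preimage]
    constructor
    · rintro h m ⟨k, hk, rfl⟩
      have : j + k - j = k := by omega
      rw [this]
      exact h k hk
    · intro h k hk
      have := h (j + k) ⟨k, hk, rfl⟩
      have h2 : j + k - j = k := by omega
      rwa [h2] at this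
  rw [h1]
  rw [hindep.meas_biInter (fun i _ => ⟨patSet P (i - j), measurableSet_patSet _ _, rfl⟩)]
  rw [Finset.prod_image (fun a _ b _ h => by omega)]
  apply Finset.prod_congr rfl
  intro k _
  have : j + k - j = k := by omega
  rw [this]

end Meas

end Stmt7Aux

open Stmt7Aux in
theorem stmt7
    (b Af Kf Ag Kg : ℝ) (hb : 0 < b)
    (f g : ℝ → ℝ)
    (hf : IsIncAlleeMap b Af Kf f) (hg : IsIncAlleeMap b Ag Kg g)
    (horder : Af < Ag ∧ Ag < Kf ∧ Kf < Kg)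
    (p δ : ℝ) (hp : p ∈ Ioo (0 : ℝ) 1) (hδ : 0 < δ)
    -- the noise law
    (ν : Measure ℝ) [IsProbabilityMeasure ν]
    (hν₁ : ν (Ioo (-δ) δ) = 1)
    (hν₂ : ∀ a c : ℝ, -δ ≤ a → a < c → c ≤ δ → 0 < ν (Ioo a c))
    -- the i.i.d. driving sequence: independent coordinates, each with law Bernoulli(p) ⊗ ν
    (μ : Measure (ℕ → Bool × ℝ)) [IsProbabilityMeasure μ]
    (hindep : iIndepFun (fun n ω => ω n) μ)
    (hlaw : ∀ n, μ.map (fun ω => ω n) =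
      ((PMF.bernoulli (Real.toNNReal p) (Real.toNNReal_le_one.mpr hp.2.le)).toMeasure).prod ν)
    -- the sets U₁, U₂, U₃
    (U₁ U₂ U₃ : Set ℝ)
    (hU₁ : U₁ = {x ∈ Ioo 0 Af | δ ≤ min (x - f x) (x - g x)})
    (hU₂ : U₂ = {x ∈ Ioo Ag Kf | δ ≤ min (f x - x) (g x - x)})
    (hU₃ : U₃ = {x ∈ Ioo Kg b | δ ≤ min (x - f x) (x - g x)})
    (hU₁ne : U₁.Nonempty) (hU₂ne : U₂.Nonempty) (hU₃ne : U₃.Nonempty)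
    (hstar : ∀ x ∈ Icc (0 : ℝ) b, ∃ y ∈ Icc x b, δ ≤ min (y - f y) (y - g y))
    (y₀ : ℝ) (hy₀ : y₀ ∈ Ioo (sSup U₁) (sInf U₂)) :
    0 < μ {ω | ∃ n₀ : ℕ, ∀ n ≥ n₀, pertOrbit b f g y₀ n ω ∈ Ico 0 (sInf U₁)} ∧
    0 < μ {ω | ∃ n₀ : ℕ, ∀ n ≥ n₀, pertOrbit b f g y₀ n ω ∈ Ioo (sSup U₂) (sInf U₃)} ∧
    μ {ω | ∃ n₀ : ℕ, ∀ n ≥ n₀, pertOrbit b f g y₀ n ω ∈ Ico 0 (sInf U₁)} +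
      μ {ω | ∃ n₀ : ℕ, ∀ n ≥ n₀, pertOrbit b f g y₀ n ω ∈ Ioo (sSup U₂) (sInf U₃)} = 1 := by
  classical
  obtain ⟨hAf0, hAfKf, hKfb, hfmap, hfcont, hfmono, hf0, hfA, hfK, hflt, hfgt⟩ := hf
  obtain ⟨hAg0, hAgKg, hKgb, hgmap, hgcont, hgmono, hg0, hgA, hgK, hglt, hggt⟩ := hg
  obtain ⟨hAfAg, hAgKf, hKfKg⟩ := horder
  have hbb : (0:ℝ) ≤ b := hb.le
  set w₁ := sInf U₁ with hw₁def
  set z₁ := sSup U₁ with hz₁def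
  set w₂ := sInf U₂ with hw₂def
  set z₂ := sSup U₂ with hz₂def
  set w₃ := sInf U₃ with hw₃def
  have hU₁sub : U₁ ⊆ Ioo 0 Af := by rw [hU₁]; exact fun x hx => hx.1
  have hU₂sub : U₂ ⊆ Ioo Ag Kf := by rw [hU₂]; exact fun x hx => hx.1
  have hU₃sub : U₃ ⊆ Ioo Kg b := by rw [hU₃]; exact fun x hx => hx.1
  have hbdd₁b : BddBelow U₁ := ⟨0, fun x hx => (hU₁sub hx).1.le⟩
  have hbdd₁a : BddAbove U₁ := ⟨Af, fun x hx => (hU₁sub hx).2.le⟩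
  have hbdd₂b : BddBelow U₂ := ⟨Ag, fun x hx => (hU₂sub hx).1.le⟩
  have hbdd₂a : BddAbove U₂ := ⟨Kf, fun x hx => (hU₂sub hx).2.le⟩
  have hbdd₃b : BddBelow U₃ := ⟨Kg, fun x hx => (hU₃sub hx).1.le⟩
  have hmincont : ContinuousOn (fun x => min (x - f x) (x - g x)) (Icc 0 b) := by
    have := (continuousOn_id.sub hfcont).inf (continuousOn_id.sub hgcont)
    simpa using this
  have hmincont' : ContinuousOn (fun x => min (f x - x) (g x - x)) (Icc 0 b) := by
    have := (hfcont.sub continuousOn_id).inf (hgcont.sub continuousOn_id)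
    simpa using this
  have hC₁closed : IsClosed (Icc 0 b ∩ (fun x => min (x - f x) (x - g x)) ⁻¹' Ici δ) :=
    hmincont.preimage_isClosed_of_isClosed isClosed_Icc isClosed_Ici
  have hC₂closed : IsClosed (Icc 0 b ∩ (fun x => min (f x - x) (g x - x)) ⁻¹' Ici δ) :=
    hmincont'.preimage_isClosed_of_isClosed isClosed_Icc isClosed_Ici
  have hU₁C : U₁ ⊆ Icc 0 b ∩ (fun x => min (x - f x) (x - g x)) ⁻¹' Ici δ := by
    intro x hx
    have h1 := hU₁sub hx
    have h2 : δ ≤ min (x - f x) (x - g x) := by rw [hU₁] at hx; exact hx.2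
    refine ⟨⟨h1.1.le, ?_⟩, h2⟩
    have h3 := h1.2
    linarith
  have hU₃C : U₃ ⊆ Icc 0 b ∩ (fun x => min (x - f x) (x - g x)) ⁻¹' Ici δ := by
    intro x hx
    have h1 := hU₃sub hx
    have h2 : δ ≤ min (x - f x) (x - g x) := by rw [hU₃] at hx; exact hx.2
    refine ⟨⟨?_, h1.2.le⟩, h2⟩
    have h3 := h1.1
    linarith
  have hU₂C : U₂ ⊆ Icc 0 b ∩ (fun x => min (f x - x) (g x - x)) ⁻¹' Ici δ := by
    intro x hx
    have h1 := hU₂sub hx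
    have h2 : δ ≤ min (f x - x) (g x - x) := by rw [hU₂] at hx; exact hx.2
    refine ⟨⟨?_, ?_⟩, h2⟩
    · have h3 := h1.1; linarith
    · have h3 := h1.2; linarith
  have hw₁mem := (hC₁closed.closure_subset_iff.2 hU₁C) (csInf_mem_closure hU₁ne hbdd₁b)
  have hz₁mem := (hC₁closed.closure_subset_iff.2 hU₁C) (csSup_mem_closure hU₁ne hbdd₁a)
  have hw₂mem := (hC₂closed.closure_subset_iff.2 hU₂C) (csInf_mem_closure hU₂ne hbdd₂b)
  have hz₂mem := (hC₂closed.closure_subset_iff.2 hU₂C) (csSup_mem_closure hU₂ne hbdd₂a)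
  have hw₃mem := (hC₁closed.closure_subset_iff.2 hU₃C) (csInf_mem_closure hU₃ne hbdd₃b)
  rw [← hw₁def] at hw₁mem
  rw [← hz₁def] at hz₁mem
  rw [← hw₂def] at hw₂mem
  rw [← hz₂def] at hz₂mem
  rw [← hw₃def] at hw₃mem
  have hw₁Icc : w₁ ∈ Icc 0 b := hw₁mem.1
  have hfw₁ : f w₁ ≤ w₁ - δ := by
    have h := hw₁mem.2
    simp only [mem_preimage, mem_Ici, le_min_iff] at h
    linarith [h.1]
  have hgw₁ : g w₁ ≤ w₁ - δ := by
    have h := hw₁mem.2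
    simp only [mem_preimage, mem_Ici, le_min_iff] at h
    linarith [h.2]
  have hw₁pos : 0 < w₁ := by
    have h0 : 0 ≤ f w₁ := (hfmap hw₁Icc).1
    linarith
  have hz₁Af : z₁ < Af := by
    have hle : z₁ ≤ Af := csSup_le hU₁ne fun x hx => (hU₁sub hx).2.le
    rcases eq_or_lt_of_le hle with heq | h
    · exfalso
      have h := hz₁mem.2
      simp only [mem_preimage, mem_Ici, le_min_iff] at h
      rw [heq, hfA] at h
      linarith [h.1]
    · exact h
  have hw₁z₁ : w₁ ≤ z₁ := csInf_le_csSup hU₁ne hbdd₁b hbdd₁a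
  have hAgw₂ : Ag < w₂ := by
    have hge : Ag ≤ w₂ := le_csInf hU₂ne fun x hx => (hU₂sub hx).1.le
    rcases eq_or_lt_of_le hge with heq | h
    · exfalso
      have h := hw₂mem.2
      simp only [mem_preimage, mem_Ici, le_min_iff] at h
      rw [← heq, hgA] at h
      linarith [h.2]
    · exact h
  have hz₂Kf : z₂ < Kf := by
    have hle : z₂ ≤ Kf := csSup_le hU₂ne fun x hx => (hU₂sub hx).2.le
    rcases eq_or_lt_of_le hle with heq | h
    · exfalso
      have h := hz₂mem.2
      simp only [mem_preimage, mem_Ici, le_min_iff] at h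
      rw [heq, hfK] at h
      linarith [h.1]
    · exact h
  have hw₂z₂ : w₂ ≤ z₂ := csInf_le_csSup hU₂ne hbdd₂b hbdd₂a
  have hfz₂ : z₂ + δ ≤ f z₂ := by
    have h := hz₂mem.2
    simp only [mem_preimage, mem_Ici, le_min_iff] at h
    linarith [h.1]
  have hgz₂ : z₂ + δ ≤ g z₂ := by
    have h := hz₂mem.2
    simp only [mem_preimage, mem_Ici, le_min_iff] at h
    linarith [h.2]
  have hKgw₃ : Kg < w₃ := by
    have hge : Kg ≤ w₃ := le_csInf hU₃ne fun x hx => (hU₃sub hx).1.le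
    rcases eq_or_lt_of_le hge with heq | h
    · exfalso
      have h := hw₃mem.2
      simp only [mem_preimage, mem_Ici, le_min_iff] at h
      rw [← heq, hgK] at h
      linarith [h.2]
    · exact h
  have hw₃b : w₃ < b := by
    obtain ⟨u, hu⟩ := hU₃ne
    exact lt_of_le_of_lt (csInf_le hbdd₃b hu) (hU₃sub hu).2
  have hfw₃ : f w₃ ≤ w₃ - δ := by
    have h := hw₃mem.2
    simp only [mem_preimage, mem_Ici, le_min_iff] at h
    linarith [h.1]
  have hgw₃ : g w₃ ≤ w₃ - δ := by
    have h := hw₃mem.2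
    simp only [mem_preimage, mem_Ici, le_min_iff] at h
    linarith [h.2]
  have hw₂pos : 0 < w₂ := by linarith
  have hz₂pos : 0 < z₂ := by linarith
  have hz₂w₃ : z₂ < w₃ := by linarith
  have hw₁b : w₁ < b := by linarith
  have hy₀z₁ : z₁ < y₀ := hy₀.1
  have hy₀w₂ : y₀ < w₂ := hy₀.2
  have hy₀pos : 0 < y₀ := by linarith
  have hy₀Icc : y₀ ∈ Icc 0 b := ⟨hy₀pos.le, by linarith⟩
  have hfmono' := hfmono.monotoneOn
  have hgmono' := hgmono.monotoneOn
  have hAfI : Af ∈ Icc 0 b := ⟨hAf0.le, by linarith⟩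
  have hKfI : Kf ∈ Icc 0 b := ⟨by linarith, by linarith⟩
  have hKgI : Kg ∈ Icc 0 b := ⟨by linarith, by linarith⟩
  have hw₂I : w₂ ∈ Icc 0 b := ⟨hw₂pos.le, by linarith⟩
  -- Ctx property fields
  have hdesc1 : ∀ t, 0 ≤ t → t < w₂ → min (f t) (g t) < t + δ := by
    intro t ht0 htw
    rcases eq_or_lt_of_le ht0 with heq | ht0'
    · calc min (f t) (g t) ≤ f t := min_le_left _ _
        _ = 0 := by rw [← heq, hf0]
        _ < t + δ := by linarith
    rcases lt_trichotomy t Ag with h | h | h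
    · have hgt : g t < t := hglt t (Or.inl ⟨ht0', h⟩)
      calc min (f t) (g t) ≤ g t := min_le_right _ _
        _ < t + δ := by linarith
    · have hgt : g t = t := by rw [h, hgA]
      calc min (f t) (g t) ≤ g t := min_le_right _ _
        _ < t + δ := by rw [hgt]; linarith
    · have hnotU : t ∉ U₂ := fun hU => absurd (csInf_le hbdd₂b hU) (not_le.2 htw)
      have h5 : ¬(t ∈ Ioo Ag Kf ∧ δ ≤ min (f t - t) (g t - t)) := by
        intro hh; exact hnotU (by rw [hU₂]; exact ⟨hh.1, hh.2⟩)
      push_neg at h5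
      have h6 := h5 ⟨h, by linarith⟩
      have h7 : min (f t - t) (g t - t) = min (f t) (g t) - t := min_sub_sub_right _ _ _
      linarith
  have hasc2 : ∀ t, w₂ ≤ t → t ≤ z₂ → t ≤ min (f t) (g t) := by
    intro t h1 h2
    have hft : t < f t := hfgt t ⟨by linarith, by linarith⟩
    have hgt : t < g t := hggt t ⟨by linarith, by linarith⟩
    exact le_min hft.le hgt.le
  have hub2 : ∀ t, w₂ ≤ t → t ≤ z₂ → min (f t) (g t) < w₃ := by
    intro t h1 h2
    have htI : t ∈ Icc 0 b := ⟨by linarith, by linarith⟩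
    have h3 : f t < f Kf := hfmono htI hKfI (by linarith)
    calc min (f t) (g t) ≤ f t := min_le_left _ _
      _ < f Kf := h3
      _ = Kf := hfK
      _ < w₃ := by linarith
  have hlb3 : ∀ t, w₃ ≤ t → t ≤ b → z₂ ≤ min (f t) (g t) := by
    intro t h1 h2
    have htI : t ∈ Icc 0 b := ⟨by linarith, h2⟩
    have h3 : f Kf < f t := hfmono hKfI htI (by linarith)
    have h4 : g Kg < g t := hgmono hKgI htI (by linarith)
    rw [hfK] at h3; rw [hgK] at h4
    exact le_min (by linarith) (by linarith)
  have hdesc3 : ∀ t, w₃ ≤ t → t ≤ b → min (f t) (g t) < t := by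
    intro t h1 h2
    have h3 : f t < t := hflt t (Or.inr ⟨by linarith, h2⟩)
    exact lt_of_le_of_lt (min_le_left _ _) h3
  have hubB : ∀ t, 0 ≤ t → t ≤ w₂ → max (f t) (g t) < w₃ := by
    intro t ht0 htw
    have htI : t ∈ Icc 0 b := ⟨ht0, by linarith⟩
    have h3 : f t ≤ f w₂ := hfmono' htI hw₂I htw
    have h4 : g t ≤ g w₂ := hgmono' htI hw₂I htw
    have h5 : f w₂ < f Kf := hfmono hw₂I hKfI (by linarith)
    have h6 : g w₂ < g Kg := hgmono hw₂I hKgI (by linarith)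
    rw [hfK] at h5; rw [hgK] at h6
    exact max_lt (by linarith) (by linarith)
  set Cx : Stmt7Aux.Ctx :=
    { b := b, δ := δ, w₁ := w₁, w₂ := w₂, z₂ := z₂, w₃ := w₃, f := f, g := g,
      hb := hb, hδ := hδ, hfm := hfmap, hgm := hgmap, hfc := hfcont, hgc := hgcont,
      hfs := hfmono, hgs := hgmono, hw₁0 := hw₁pos, hw₁b := hw₁b, hw₂0 := hw₂pos,
      hw₂z₂ := hw₂z₂, hz₂0 := hz₂pos, hz₂w₃ := hz₂w₃, hw₃b := hw₃b,
      hfw₁ := hfw₁, hgw₁ := hgw₁, hfz₂ := hfz₂, hgz₂ := hgz₂, hfw₃ := hfw₃, hgw₃ := hgw₃,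
      hdesc1 := hdesc1, hasc2 := hasc2, hub2 := hub2, hlb3 := hlb3, hdesc3 := hdesc3,
      hubB := hubB } with hCxdef
  have hupprop : ∀ t, y₀ ≤ t → t ≤ w₂ → t - δ < max (f t) (g t) := by
    intro t h1 h2
    rcases lt_or_ge t Af with h | h
    · have hnotU : t ∉ U₁ := fun hU =>
        absurd (le_csSup hbdd₁a hU) (not_le.2 (by linarith))
      have h5 : ¬(t ∈ Ioo 0 Af ∧ δ ≤ min (t - f t) (t - g t)) := by
        intro hh; exact hnotU (by rw [hU₁]; exact ⟨hh.1, hh.2⟩)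
      push_neg at h5
      have h6 := h5 ⟨by linarith, h⟩
      have h7 : min (t - f t) (t - g t) = t - max (f t) (g t) := min_sub_sub_left _ _ _
      linarith
    · rcases eq_or_lt_of_le h with heq | h'
      · have h8 : f t = t := by rw [← heq, hfA]
        calc t - δ < t := by linarith
          _ = f t := h8.symm
          _ ≤ max (f t) (g t) := le_max_left _ _
      · have h8 : t < f t := hfgt t ⟨h', by linarith⟩
        calc t - δ < f t := by linarith
          _ ≤ max (f t) (g t) := le_max_left _ _
  -- Stage 2: the probabilistic part.
  -- measurable versions of the maps
  set fc : ℝ → ℝ := fun t => f (clampI b t) with hfcdef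
  set gc : ℝ → ℝ := fun t => g (clampI b t) with hgcdef
  have hfcm : Measurable fc :=
    (hfcont.comp_continuous (clampI_continuous b) (fun t => clampI_mem hbb t)).measurable
  have hgcm : Measurable gc :=
    (hgcont.comp_continuous (clampI_continuous b) (fun t => clampI_mem hbb t)).measurable
  set Yb : ℕ → Ωt → ℝ := fun n ω => pertOrbit b f g y₀ n ω with hYbdef
  have horbeq : ∀ n (ω : Ωt), Yb n ω = pertOrbit b fc gc y₀ n ω := by
    intro n ω
    refine pertOrbit_congr hbb ?_ ?_ hy₀Icc n ω
    · intro t ht; simp only [hfcdef]; rw [clampI_eq ht]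
    · intro t ht; simp only [hgcdef]; rw [clampI_eq ht]
  have hYmf : ∀ n, Measurable[Filt n] (Yb n) := by
    intro n
    have h1 : Yb n = fun ω => pertOrbit b fc gc y₀ n ω := funext fun ω => horbeq n ω
    rw [h1]
    exact pertOrbit_measurable_filt hfcm hgcm y₀ n
  have hYm : ∀ n, Measurable (Yb n) := fun n => (hYmf n).mono (Filt_le_ambient n) le_rfl
  -- coordinate laws
  have hcoord : ∀ (m : ℕ) (S : Set (Bool × ℝ)), MeasurableSet S →
      μ ((fun ω : Ωt => ω m) ⁻¹' S)
        = (((PMF.bernoulli (Real.toNNReal p) (Real.toNNReal_le_one.mpr hp.2.le)).toMeasure).prod ν) S := by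
    intro m S hS
    rw [← hlaw m, Measure.map_apply (measurable_pi_apply m) hS]
  have hcoordpos : ∀ (m : ℕ) (e : Bool × ℝ × ℝ), -δ ≤ e.2.1 → e.2.1 < e.2.2 → e.2.2 ≤ δ →
      0 < μ ((fun ω : Ωt => ω m) ⁻¹' entrySet e) := by
    intro m e h1 h2 h3
    rw [hcoord m _ (show MeasurableSet (entrySet e) from
      (measurableSet_singleton _).prod measurableSet_Ioo)]
    rw [show entrySet e = {e.1} ×ˢ Ioo e.2.1 e.2.2 from rfl, Measure.prod_prod]
    refine ENNReal.mul_pos ?_ (hν₂ _ _ h1 h2 h3).ne'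
    rw [PMF.toMeasure_apply_singleton _ _ (measurableSet_singleton _)]
    cases hcase : e.1
    · rw [PMF.bernoulli_apply]
      simp only [Bool.cond_false]
      exact (tsub_pos_iff_lt.2 (ENNReal.coe_lt_one_iff.2 (Real.toNNReal_lt_one.2 hp.2))).ne'
    · rw [PMF.bernoulli_apply]
      simp only [Bool.cond_true]
      exact (ENNReal.coe_pos.2 (Real.toNNReal_pos.2 hp.1)).ne'
  have hmatchpos : ∀ (j : ℕ) (Pp : Pat), ValidPat δ Pp → 0 < μ (matchEvent j Pp) := by
    intro j Pp hvalP
    rw [matchEvent_prob hindep, CanonicallyOrderedAdd.prod_pos]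
    intro k hk
    have hk' : k < Pp.length := Finset.mem_range.1 hk
    have hmem : Pp[k]'hk' ∈ Pp := List.getElem_mem _
    obtain ⟨h1, h2, h3⟩ := hvalP _ hmem
    have hps : patSet Pp k = entrySet (Pp[k]'hk') := dif_pos hk'
    rw [hps]
    exact hcoordpos _ _ h1 h2 h3
  -- the full-noise event
  set NS : Set Ωt := ⋂ m : ℕ, (fun ω : Ωt => ω m) ⁻¹' ((univ : Set Bool) ×ˢ Ioo (-δ) δ)
    with hNSdef
  have hNScompl : μ NSᶜ = 0 := by
    rw [hNSdef, compl_iInter]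
    refine measure_iUnion_null fun m => ?_
    have h1 : μ ((fun ω : Ωt => ω m) ⁻¹' ((univ : Set Bool) ×ˢ Ioo (-δ) δ)) = 1 := by
      rw [hcoord m _ (MeasurableSet.univ.prod measurableSet_Ioo), Measure.prod_prod, hν₁,
        measure_univ, one_mul]
    rw [measure_compl ((measurable_pi_apply m) (MeasurableSet.univ.prod measurableSet_Ioo))
      (measure_ne_top μ _), h1, measure_univ]
    simp
  have hNSnoise : ∀ ω ∈ NS, ∀ k : ℕ, (ω k).2 ∈ Ioo (-δ) δ := by
    intro ω hω k
    have := mem_iInter.1 hω k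
    exact (mem_prod.1 this).2
  -- invariance of the traps
  have hinvlow : ∀ x ∈ Ico (0:ℝ) w₁, ∀ ε ∈ Ioo (-δ) δ, ∀ qq : Bool,
      stepf b f g x (qq, ε) ∈ Ico 0 w₁ := fun x hx ε hε qq => Cx.inv_lower hx hε qq
  have hinvup : ∀ x ∈ Ioo z₂ w₃, ∀ ε ∈ Ioo (-δ) δ, ∀ qq : Bool,
      stepf b f g x (qq, ε) ∈ Ioo z₂ w₃ := fun x hx ε hε qq => Cx.inv_upper hx hε qq
  -- the finite driven cover
  choose V P hVo hVmem hvalP hdr using Cx.cover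
  have hcovU : Icc (0:ℝ) b ⊆ ⋃ x, V x := fun x hx => mem_iUnion.2 ⟨x, hVmem x hx⟩
  obtain ⟨s, hscov⟩ := isCompact_Icc.elim_finite_subcover V hVo hcovU
  have hsne : s.Nonempty := by
    have h0 : (0:ℝ) ∈ Icc (0:ℝ) b := ⟨le_rfl, hbb⟩
    obtain ⟨i, hi, _⟩ := mem_iUnion₂.1 (hscov h0)
    exact ⟨i, hi⟩
  set N : ℕ := s.sup fun i => (P i).length with hNdef
  set Q : ℝ → Pat := fun i => P i ++ List.replicate (N - (P i).length) ((true : Bool), -δ, δ)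
    with hQdef
  have hQlen : ∀ i ∈ s, (Q i).length = N := by
    intro i hi
    have h1 : (P i).length ≤ N := Finset.le_sup (f := fun i => (P i).length) hi
    simp only [hQdef, List.length_append, List.length_replicate]
    omega
  have hQval : ∀ i, ValidPat δ (Q i) := by
    intro i e he
    rcases List.mem_append.1 he with h | h
    · exact hvalP i e h
    · rw [List.eq_of_mem_replicate h]
      exact ⟨le_rfl, show -δ < δ by linarith, le_rfl⟩
  have hQdr : ∀ i, Drives b f g (Q i) (V i) (Ico 0 w₁) ∨ Drives b f g (Q i) (V i) (Ioo z₂ w₃) := by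
    intro i
    rcases hdr i with h | h
    · exact Or.inl (Cx.drives_pad hinvlow h _)
    · exact Or.inr (Cx.drives_pad hinvup h _)
  -- disjointify the cover
  set W : ℝ → Set ℝ := fun i => V i \ ⋃ j ∈ s.filter (· < i), V j with hWdef
  have hWsub : ∀ i, W i ⊆ V i := fun i => diff_subset
  have hWmeas : ∀ i, MeasurableSet (W i) := fun i =>
    (hVo i).measurableSet.diff (Finset.measurableSet_biUnion _ fun j _ => (hVo j).measurableSet)
  have hWdisj : ∀ i ∈ s, ∀ j ∈ s, i ≠ j → Disjoint (W i) (W j) := by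
    intro i hi j hj hij
    rcases hij.lt_or_gt with h | h
    · refine Set.disjoint_left.2 fun x hxi hxj => ?_
      exact hxj.2 (mem_iUnion₂.2 ⟨i, Finset.mem_filter.2 ⟨hi, h⟩, hxi.1⟩)
    · refine Set.disjoint_left.2 fun x hxi hxj => ?_
      exact hxi.2 (mem_iUnion₂.2 ⟨j, Finset.mem_filter.2 ⟨hj, h⟩, hxj.1⟩)
  have hWcov : ∀ x ∈ Icc (0:ℝ) b, ∃ i ∈ s, x ∈ W i := by
    intro x hx
    have hne : (s.filter (fun i => x ∈ V i)).Nonempty := by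
      obtain ⟨i, hi, hxi⟩ := mem_iUnion₂.1 (hscov hx)
      exact ⟨i, Finset.mem_filter.2 ⟨hi, hxi⟩⟩
    set i₀ := (s.filter (fun i => x ∈ V i)).min' hne with hi₀
    have hi₀mem := Finset.min'_mem _ hne
    have hi₀s : i₀ ∈ s := (Finset.mem_filter.1 hi₀mem).1
    refine ⟨i₀, hi₀s, ⟨(Finset.mem_filter.1 hi₀mem).2, fun hmem => ?_⟩⟩
    obtain ⟨j, hj, hxj⟩ := mem_iUnion₂.1 hmem
    obtain ⟨hjs, hjlt⟩ := Finset.mem_filter.1 hj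
    have hle : i₀ ≤ j := by
      have hjmem : j ∈ s.filter (fun i => x ∈ V i) := Finset.mem_filter.2 ⟨hjs, hxj⟩
      rw [hi₀]
      exact Finset.min'_le _ j hjmem
    exact absurd hle (not_le.2 hjlt)
  -- the block events
  set A : ℕ → ℝ → Set Ωt := fun j i => matchEvent (j * N) (Q i) with hAdef
  set G : ℕ → Set Ωt := fun j => ⋃ i ∈ s, (Yb (j * N) ⁻¹' W i ∩ A j i) with hGdef
  have hAmeas : ∀ j i, MeasurableSet (A j i) := fun j i => measurableSet_matchEvent _ _
  have hGmeas : ∀ j, MeasurableSet (G j) := fun j =>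
    MeasurableSet.biUnion s.countable_toSet fun i _ =>
      ((hYm (j*N)) (hWmeas i)).inter (hAmeas j i)
  have hGmf : ∀ j K, j < K → MeasurableSet[Filt (K * N)] (G j) := by
    intro j K hjK
    refine MeasurableSet.biUnion s.countable_toSet fun i hi => ?_
    have hi' : i ∈ s := hi
    refine MeasurableSet.inter ?_ ?_
    · exact ((hYmf (j*N)).mono (Filt_mono (Nat.mul_le_mul_right N hjK.le)) le_rfl) (hWmeas i)
    · refine matchEvent_measurable_filt (j*N) (Q i) (K*N) ?_
      rw [hQlen i hi']
      calc j * N + N = (j + 1) * N := (Nat.succ_mul j N).symm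
        _ ≤ K * N := Nat.mul_le_mul_right N hjK
  have hAconst : ∀ j i, i ∈ s → μ (A j i) = μ (A 0 i) := by
    intro j i _
    simp only [hAdef]
    rw [matchEvent_prob hindep, matchEvent_prob hindep]
    refine Finset.prod_congr rfl fun k _ => ?_
    rw [hcoord _ _ (measurableSet_patSet _ _), hcoord _ _ (measurableSet_patSet _ _)]
  have hApos : ∀ i, 0 < μ (A 0 i) := fun i => hmatchpos _ _ (hQval i)
  set q : ENNReal := s.sup' hsne fun i => 1 - μ (A 0 i) with hqdef
  have hq1 : q < 1 := by
    rw [hqdef, Finset.sup'_lt_iff]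
    intro i _
    exact ENNReal.sub_lt_self ENNReal.one_ne_top one_ne_zero (hApos i).ne'
  have hqle : ∀ i ∈ s, 1 - μ (A 0 i) ≤ q := by
    intro i hi
    rw [hqdef]
    exact Finset.le_sup' (fun i => 1 - μ (A 0 i)) hi
  -- the inductive bound
  set EE : ℕ → Set Ωt := fun K => ⋂ j ∈ Finset.range K, (G j)ᶜ with hEEdef
  have hEEmeas : ∀ K, MeasurableSet (EE K) := fun K =>
    MeasurableSet.biInter (Finset.range K).countable_toSet fun j _ => (hGmeas j).compl
  have hEEfilt : ∀ K, MeasurableSet[Filt (K * N)] (EE K) := by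
    intro K
    refine MeasurableSet.biInter (Finset.range K).countable_toSet fun j hj => ?_
    have hj' : j ∈ Finset.range K := hj
    exact (hGmf j K (Finset.mem_range.1 hj')).compl
  have hEEbound : ∀ K, μ (EE K) ≤ q ^ K := by
    intro K
    induction K with
    | zero => simp [hEEdef]
    | succ K ih =>
        have hEEsucc : EE (K+1) = EE K ∩ (G K)ᶜ := by
          simp only [hEEdef, Finset.range_add_one]
          rw [Finset.set_biInter_insert]
          exact inter_comm _ _
        have hsub2 : EE (K+1) ⊆ ⋃ i ∈ s, ((EE K ∩ Yb (K*N) ⁻¹' W i) ∩ (A K i)ᶜ) := by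
          rw [hEEsucc]
          rintro ω ⟨hE, hG⟩
          obtain ⟨i, hi, hWi⟩ := hWcov (Yb (K*N) ω) (pertOrbit_mem_Icc hbb f g hy₀Icc (K*N) ω)
          refine mem_iUnion₂.2 ⟨i, hi, ⟨⟨hE, hWi⟩, fun hA => ?_⟩⟩
          exact hG (mem_iUnion₂.2 ⟨i, hi, ⟨hWi, hA⟩⟩)
        have hindep2 : Indep (Filt (K*N))
            (⨆ i ∈ {i : ℕ | i < K*N}ᶜ, MeasurableSpace.comap (fun ω : Ωt => ω i) inferInstance)
            μ :=
          indep_biSup_compl (fun n => measurable_iff_comap_le.1 (measurable_pi_apply n))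
            hindep.iIndep {i : ℕ | i < K*N}
        have hterm : ∀ i ∈ s, μ ((EE K ∩ Yb (K*N) ⁻¹' W i) ∩ (A K i)ᶜ)
            ≤ q * μ (EE K ∩ Yb (K*N) ⁻¹' W i) := by
          intro i hi
          set S := EE K ∩ Yb (K*N) ⁻¹' W i with hSdef
          have hSfilt : MeasurableSet[Filt (K*N)] S :=
            (hEEfilt K).inter ((hYmf (K*N)) (hWmeas i))
          have hAtail : MeasurableSet[⨆ i ∈ {i : ℕ | i < K*N}ᶜ,
              MeasurableSpace.comap (fun ω : Ωt => ω i) inferInstance] (A K i) :=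
            matchEvent_measurable_tail (K*N) (Q i) (K*N) le_rfl
          have hprod : μ (S ∩ A K i) = μ S * μ (A K i) :=
            (Indep_iff _ _ μ).1 hindep2 S (A K i) hSfilt hAtail
          have hsplit : μ (S ∩ A K i) + μ (S \ A K i) = μ S :=
            measure_inter_add_diff S (hAmeas K i)
          have hdiff : μ (S \ A K i) = μ S - μ S * μ (A K i) := by
            rw [← hprod]
            exact ENNReal.eq_sub_of_add_eq (measure_ne_top μ _) (by rw [add_comm]; exact hsplit)
          have heq2 : S ∩ (A K i)ᶜ = S \ A K i := rfl
          rw [heq2, hdiff, hAconst K i hi]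
          have hfactor : μ S - μ S * μ (A 0 i) = (1 - μ (A 0 i)) * μ S := by
            rw [ENNReal.sub_mul (fun _ _ => measure_ne_top μ _), one_mul, mul_comm]
          rw [hfactor]
          exact mul_le_mul_left (hqle i hi) _
        have hdisjS : Set.PairwiseDisjoint (↑s) (fun i => EE K ∩ Yb (K*N) ⁻¹' W i) := by
          intro i hi j hj hij
          exact Disjoint.mono inter_subset_right inter_subset_right
            ((hWdisj i hi j hj hij).preimage _)
        have hsum : ∑ i ∈ s, μ (EE K ∩ Yb (K*N) ⁻¹' W i)
            = μ (⋃ i ∈ s, (EE K ∩ Yb (K*N) ⁻¹' W i)) :=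
          (measure_biUnion_finset hdisjS fun i _ => (hEEmeas K).inter ((hYm (K*N)) (hWmeas i))).symm
        calc μ (EE (K+1)) ≤ μ (⋃ i ∈ s, ((EE K ∩ Yb (K*N) ⁻¹' W i) ∩ (A K i)ᶜ)) :=
              measure_mono hsub2
          _ ≤ ∑ i ∈ s, μ ((EE K ∩ Yb (K*N) ⁻¹' W i) ∩ (A K i)ᶜ) := measure_biUnion_finset_le _ _
          _ ≤ ∑ i ∈ s, q * μ (EE K ∩ Yb (K*N) ⁻¹' W i) := Finset.sum_le_sum hterm
          _ = q * ∑ i ∈ s, μ (EE K ∩ Yb (K*N) ⁻¹' W i) := (Finset.mul_sum _ _ _).symm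
          _ = q * μ (⋃ i ∈ s, (EE K ∩ Yb (K*N) ⁻¹' W i)) := by rw [hsum]
          _ ≤ q * μ (EE K) :=
              mul_le_mul_right (measure_mono (iUnion₂_subset fun i _ => inter_subset_left)) q
          _ ≤ q * q ^ K := mul_le_mul_right ih q
          _ = q ^ (K+1) := (pow_succ' q K).symm
  have hInterG : μ (⋂ j : ℕ, (G j)ᶜ) = 0 := by
    have hsubE : ∀ K, (⋂ j : ℕ, (G j)ᶜ) ⊆ EE K := by
      intro K ω hω
      exact mem_iInter₂.2 fun j _ => mem_iInter.1 hω j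
    have hle : ∀ K, μ (⋂ j : ℕ, (G j)ᶜ) ≤ q ^ K :=
      fun K => le_trans (measure_mono (hsubE K)) (hEEbound K)
    have htend := ENNReal.tendsto_pow_atTop_nhds_zero_of_lt_one hq1
    exact le_antisymm (ge_of_tendsto' htend hle) zero_le
  have hUnionG : μ (⋃ j : ℕ, G j) = 1 := by
    have hcompl : (⋃ j : ℕ, G j)ᶜ = ⋂ j : ℕ, (G j)ᶜ := compl_iUnion _
    have h2 := measure_add_measure_compl (μ := μ) (MeasurableSet.iUnion hGmeas)
    rw [hcompl, hInterG, add_zero, measure_univ] at h2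
    exact h2
  -- the target events
  set E₀ : Set Ωt := {ω | ∃ n₀ : ℕ, ∀ n ≥ n₀, pertOrbit b f g y₀ n ω ∈ Ico 0 w₁} with hE₀def
  set E₁ : Set Ωt := {ω | ∃ n₀ : ℕ, ∀ n ≥ n₀, pertOrbit b f g y₀ n ω ∈ Ioo z₂ w₃} with hE₁def
  have hE₀eq : E₀ = ⋃ n₀ : ℕ, ⋂ n : ℕ, ⋂ (_ : n₀ ≤ n), Yb n ⁻¹' (Ico 0 w₁) := by
    ext ω
    simp only [hE₀def, hYbdef, mem_setOf_eq, mem_iUnion, mem_iInter, mem_preimage, ge_iff_le]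
  have hE₁eq : E₁ = ⋃ n₀ : ℕ, ⋂ n : ℕ, ⋂ (_ : n₀ ≤ n), Yb n ⁻¹' (Ioo z₂ w₃) := by
    ext ω
    simp only [hE₁def, hYbdef, mem_setOf_eq, mem_iUnion, mem_iInter, mem_preimage, ge_iff_le]
  have hE₀meas : MeasurableSet E₀ := by
    rw [hE₀eq]
    exact MeasurableSet.iUnion fun n₀ => MeasurableSet.iInter fun n =>
      MeasurableSet.iInter fun _ => (hYm n) measurableSet_Ico
  have hE₁meas : MeasurableSet E₁ := by
    rw [hE₁eq]
    exact MeasurableSet.iUnion fun n₀ => MeasurableSet.iInter fun n =>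
      MeasurableSet.iInter fun _ => (hYm n) measurableSet_Ioo
  have hGsubE : ∀ j, NS ∩ G j ⊆ E₀ ∪ E₁ := by
    intro j ω hω
    obtain ⟨hNSω, hGω⟩ := hω
    obtain ⟨i, hi, hmem⟩ := mem_iUnion₂.1 hGω
    obtain ⟨hWi, hAi⟩ := hmem
    have hx : Yb (j*N) ω ∈ V i ∩ Icc 0 b :=
      ⟨hWsub i hWi, pertOrbit_mem_Icc hbb f g hy₀Icc (j*N) ω⟩
    have hmatch : Matches (Q i) (fun k => ω (j*N + k)) := hAi
    have horb : pertOrbit b f g y₀ (j*N + N) ω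
        = pertOrbit b f g (Yb (j*N) ω) N (fun k => ω (j*N + k)) :=
      pertOrbit_add b f g y₀ (j*N) N ω
    have hnoise := hNSnoise ω hNSω
    rcases hQdr i with hD | hD
    · left
      have h1 := hD _ hx _ hmatch
      rw [hQlen i hi] at h1
      rw [← horb] at h1
      exact ⟨j*N + N, fun n hn => Cx.forever hinvlow h1 hnoise n hn⟩
    · right
      have h1 := hD _ hx _ hmatch
      rw [hQlen i hi] at h1
      rw [← horb] at h1
      exact ⟨j*N + N, fun n hn => Cx.forever hinvup h1 hnoise n hn⟩
  have hE01 : μ (E₀ ∪ E₁) = 1 := by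
    refine le_antisymm prob_le_one ?_
    have h1 : (⋃ j : ℕ, G j) ⊆ (NS ∩ ⋃ j : ℕ, G j) ∪ NSᶜ := by
      intro ω hω
      by_cases h : ω ∈ NS
      · exact Or.inl ⟨h, hω⟩
      · exact Or.inr h
    have h2 : μ (⋃ j : ℕ, G j) ≤ μ (NS ∩ ⋃ j : ℕ, G j) + μ NSᶜ :=
      le_trans (measure_mono h1) (measure_union_le _ _)
    rw [hUnionG, hNScompl, add_zero] at h2
    refine le_trans h2 (measure_mono ?_)
    rintro ω ⟨hNSω, hGω⟩
    obtain ⟨j, hj⟩ := mem_iUnion.1 hGω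
    exact hGsubE j ⟨hNSω, hj⟩
  have hdisjE : Disjoint E₀ E₁ := by
    rw [Set.disjoint_left]
    rintro ω ⟨n₀, h0⟩ ⟨n₁, h1⟩
    have h2 := h0 (max n₀ n₁) (le_max_left _ _)
    have h3 := h1 (max n₀ n₁) (le_max_right _ _)
    have h4 := h2.2
    have h5 := h3.1
    linarith
  have hposlow : 0 < μ E₀ := by
    obtain ⟨Vs, Ps, hVos, hyVs, hvals, hdrs⟩ := Cx.reach_lower y₀ hy₀pos.le hy₀w₂
    have hBsub : matchEvent 0 Ps ∩ NS ⊆ E₀ := by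
      rintro ω ⟨hm, hn⟩
      have hm' : Matches Ps (fun k => ω (0 + k)) := hm
      have hid : (fun k => ω (0 + k)) = ω := funext fun k => by rw [Nat.zero_add]
      rw [hid] at hm'
      have h1 := hdrs y₀ ⟨hyVs, hy₀Icc⟩ ω hm'
      exact ⟨Ps.length, fun n hn' => Cx.forever hinvlow h1 (hNSnoise ω hn) n hn'⟩
    have h2 : μ (matchEvent 0 Ps) ≤ μ (matchEvent 0 Ps ∩ NS) + μ NSᶜ := by
      refine le_trans (measure_mono ?_) (measure_union_le _ _)
      intro ω hω
      by_cases h : ω ∈ NS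
      · exact Or.inl ⟨hω, h⟩
      · exact Or.inr h
    rw [hNScompl, add_zero] at h2
    exact lt_of_lt_of_le (hmatchpos 0 Ps hvals) (le_trans h2 (measure_mono hBsub))
  have hposup : 0 < μ E₁ := by
    obtain ⟨Vs, Ps, hVos, hyVs, hvals, hdrs⟩ := Cx.reach_up_from y₀ hy₀pos hy₀w₂ hupprop
    have hBsub : matchEvent 0 Ps ∩ NS ⊆ E₁ := by
      rintro ω ⟨hm, hn⟩
      have hm' : Matches Ps (fun k => ω (0 + k)) := hm
      have hid : (fun k => ω (0 + k)) = ω := funext fun k => by rw [Nat.zero_add]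
      rw [hid] at hm'
      have h1 := hdrs y₀ ⟨hyVs, hy₀Icc⟩ ω hm'
      exact ⟨Ps.length, fun n hn' => Cx.forever hinvup h1 (hNSnoise ω hn) n hn'⟩
    have h2 : μ (matchEvent 0 Ps) ≤ μ (matchEvent 0 Ps ∩ NS) + μ NSᶜ := by
      refine le_trans (measure_mono ?_) (measure_union_le _ _)
      intro ω hω
      by_cases h : ω ∈ NS
      · exact Or.inl ⟨hω, h⟩
      · exact Or.inr h
    rw [hNScompl, add_zero] at h2
    exact lt_of_lt_of_le (hmatchpos 0 Ps hvals) (le_trans h2 (measure_mono hBsub))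
  refine ⟨hposlow, hposup, ?_⟩
  rw [← measure_union hdisjE hE₁meas]
  exact hE01
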